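/- In PG(2,q^3) with line at infinity ℓ∞, let C̄ be an F_q-conic in an F_q-subplane π̄ secant to ℓ∞, and suppose C̄⁺ is exterior to ℓ∞ (so C̄ ∩ ℓ∞ = ∅ and C̄⁺ ∩ ℓ∞ = ∅). Then C̄⁺⁺ meets ℓ∞⁺⁺ in two distinct points P̄, Q̄ lying in ℓ∞⁺⁺∖ℓ∞; moreover Q̄ = P̄^{c̄_π} = P̄^{q^3}, P̄^{c̄_π^2} = P̄, and, setting b̄ = π̄ ∩ ℓ∞, P̄^{c̄_b} = P̄^{c̄_π} = Q̄. -/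

import Mathlib

/-!
Common set-up: an explicit model of the Bruck-Bose representation of PG(2,q^3) in PG(6,q),
of the Bose representation of PG(2,q^3) in PG(8,q), and of their cubic and sextic
field extensions.

`Fq`, `F3`, `F6` are the fields of orders `q`, `q^3`, `q^6`.

* PG(2,q^3) is `Projectivization F3 (Fin 3 → F3)`, with line at infinity `z = 0`.
* The ambient 7-dimensional `Fq`-space of PG(6,q) is `V6 = (Fin 2 → F3) × Fq`.
  Its extensions to `F3` and `F6` are modelled blockwise using the Galois splitting
  `F3 ⊗ F3 ≅ F3 × F3 × F3`:  `V63 = (Fin 3 → Fin 2 → F3) × F3` and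
  `V66 = (Fin 3 → Fin 2 → F6) × F6`, with the Frobenius collineation acting by a cyclic
  shift of the blocks composed with coordinatewise q-th powers (`tauBB`).
* The hyperplane at infinity is `{v | v.2 = 0}`; the regular 2-spread consists of
  the planes `{(l•(x,y),0) | l ∈ F3}`, whose extensions meet the transversal lines:
  the transversal line `g^{q^e}` is the set of vectors `gBlockVec e a b`.
* Similarly PG(8,q) has ambient `Fq`-space `Fin 3 → F3` with extensions
  `Fin 3 → Fin 3 → K` (`K = F3, F6`), the Bose spread plane of a point `(x:y:z)` being
  `{l•(x,y,z)}`; the transversal plane `Γ^{q^e}` is the block `e` (`GammaPlane e`),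
  and a point `X̄ = (x:y:z)` of PG(2,q^3) corresponds to the point of `Γ` with vector
  `blockVec 0 ![x,y,z]`.
-/

noncomputable section
open scoped Classical

/-- The projective point `P` is represented, up to a nonzero scalar, by the vector `w`. -/
def pe {K V : Type*} [DivisionRing K] [AddCommGroup V] [Module K V]
    (P : Projectivization K V) (w : V) : Prop :=
  ∃ c : K, c ≠ 0 ∧ P.rep = c • w

/-- `v ↦ B ⬝ v^q`, the vector form of a collineation `X ↦ B X^q`. -/
def cpiVec (q : ℕ) {K : Type*} [Field K] (B : Matrix (Fin 3) (Fin 3) K)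
    (v : Fin 3 → K) : Fin 3 → K :=
  B.mulVec fun i => v i ^ q

/-- `v ↦ D ⬝ v^q` on a line (pairs of coordinates). -/
def cbVec (q : ℕ) {K : Type*} [Field K] (D : Matrix (Fin 2) (Fin 2) K)
    (v : Fin 2 → K) : Fin 2 → K :=
  D.mulVec fun i => v i ^ q

/-- The vector of the Bruck-Bose ambient extension placing the pair `(a,b)` in
Galois block `e` (a vector on the transversal line `g^{q^e}`). -/
def gBlockVec {K : Type*} [Zero K] (e : Fin 3) (a b : K) : (Fin 3 → Fin 2 → K) × K :=
  (fun e' => if e' = e then ![a, b] else 0, 0)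

/-- The Frobenius collineation `X ↦ X^q` on (extensions of) the Bruck-Bose ambient space. -/
def tauBB (q : ℕ) {K : Type*} [Field K] (w : (Fin 3 → Fin 2 → K) × K) :
    (Fin 3 → Fin 2 → K) × K :=
  (fun e k => w.1 (e - 1) k ^ q, w.2 ^ q)

/-- The vector of the Bose ambient extension placing `u` in Galois block `e`. -/
def blockVec {K : Type*} [Zero K] (e : Fin 3) (u : Fin 3 → K) : Fin 3 → Fin 3 → K :=
  fun e' => if e' = e then u else 0

/-- The Frobenius collineation `X ↦ X^q` on (extensions of) the Bose ambient space. -/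
def tauBose (q : ℕ) {K : Type*} [Field K] (w : Fin 3 → Fin 3 → K) : Fin 3 → Fin 3 → K :=
  fun e i => w (e - 1) i ^ q

/-- The transversal plane `Γ^{q^e}` of the Bose spread (as a set of vectors). -/
def GammaPlane {K : Type*} [Zero K] (e : Fin 3) : Set (Fin 3 → Fin 3 → K) :=
  {w | ∀ e', e' ≠ e → w e' = 0}

/-- The scroll plane `⟪X⟫_π = ⟨X, (X^{c_π^5})^q, (X^{c_π^4})^{q^2}⟩` of the point `X ∈ Γ`
(or `Γ^{extension}`) with `Γ`-coordinate vector `u`, where `c_π` is given by the matrix `B`. -/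
def scrollSub (q : ℕ) {K : Type*} [Field K] (B : Matrix (Fin 3) (Fin 3) K)
    (u : Fin 3 → K) : Submodule K (Fin 3 → Fin 3 → K) :=
  Submodule.span K
    {blockVec 0 u,
     blockVec 1 (fun i => ((cpiVec q B)^[5] u) i ^ q),
     blockVec 2 (fun i => ((cpiVec q B)^[4] u) i ^ q ^ 2)}

/-- The `b`-scroll plane `⟪X⟫_b = ⟨X, (X^{c_b^5})^q, (X^{c_b^4})^{q^2}⟩` of the point `X` of
the transversal line `g` (or its extension) with coordinate pair `(a,b)`, where `c_b` is
given by the matrix `D`. -/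
def bScrollSub (q : ℕ) {K : Type*} [Field K] (D : Matrix (Fin 2) (Fin 2) K)
    (a b : K) : Submodule K ((Fin 3 → Fin 2 → K) × K) :=
  Submodule.span K
    {gBlockVec 0 a b,
     gBlockVec 1 (((cbVec q D)^[5] ![a, b]) 0 ^ q) (((cbVec q D)^[5] ![a, b]) 1 ^ q),
     gBlockVec 2 (((cbVec q D)^[4] ![a, b]) 0 ^ q ^ 2) (((cbVec q D)^[4] ![a, b]) 1 ^ q ^ 2)}

/-- `S` is a single point lying on one of the transversal planes (a T-point). -/
def IsTPointSet {K : Type*} [Field K]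
    (S : Set (Projectivization K (Fin 3 → Fin 3 → K))) : Prop :=
  ∃ w : Fin 3 → Fin 3 → K, w ≠ 0 ∧ (∃ e, w ∈ GammaPlane e) ∧ S = {P | pe P w}

/-- `S` is the point set of a T-line: a line meeting two of the transversal planes. -/
def IsTLineSet {K : Type*} [Field K]
    (S : Set (Projectivization K (Fin 3 → Fin 3 → K))) : Prop :=
  ∃ (e e' : Fin 3) (u u' : Fin 3 → Fin 3 → K), e ≠ e' ∧ u ≠ 0 ∧ u' ≠ 0 ∧
    u ∈ GammaPlane e ∧ u' ∈ GammaPlane e' ∧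
    S = {P | ∃ s t : K, P.rep = s • u + t • u'}

/-- `S` is the point set of a T-plane: a plane meeting all three transversal planes. -/
def IsTPlaneSet {K : Type*} [Field K]
    (S : Set (Projectivization K (Fin 3 → Fin 3 → K))) : Prop :=
  ∃ u : Fin 3 → Fin 3 → Fin 3 → K, (∀ e, u e ∈ GammaPlane e) ∧ LinearIndependent K u ∧
    S = {P | P.rep ∈ Submodule.span K (Set.range u)}

/-- `S` is empty, a T-point, a T-line or a T-plane. -/
def TClass {K : Type*} [Field K]
    (S : Set (Projectivization K (Fin 3 → Fin 3 → K))) : Prop :=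
  S = ∅ ∨ IsTPointSet S ∨ IsTLineSet S ∨ IsTPlaneSet S

/-- `ζ` : the linear embedding of the (extended) Bruck-Bose ambient space into the
(extended) Bose ambient space, realising PG(6,q) as the 6-space `Σ_{6,q}` of PG(8,q). -/
def zetaBB {K : Type*} [Field K] (w : (Fin 3 → Fin 2 → K) × K) : Fin 3 → Fin 3 → K :=
  fun e => ![w.1 e 0, w.1 e 1, w.2]

section BruckBose

variable (Fq F3 F6 : Type) [Field Fq] [Field F3] [Field F6]
  [Fintype Fq] [Fintype F3] [Fintype F6]
  [Algebra Fq F3] [Algebra F3 F6] [Algebra Fq F6] [IsScalarTower Fq F3 F6]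

/-- The points of `PG(2,q^3)`. -/
abbrev Pt2 := Projectivization F3 (Fin 3 → F3)

/-- The points of the quadratic extension `PG(2,q^6)`. -/
abbrev Pt2e := Projectivization F6 (Fin 3 → F6)

/-- The line at infinity `ℓ∞` of `PG(2,q^3)`. -/
def linf : Set (Pt2 F3) := {P | P.rep 2 = 0}

/-- The extended line at infinity `ℓ∞⁺⁺` of `PG(2,q^6)`. -/
def linfe : Set (Pt2e F6) := {P | P.rep 2 = 0}

/-- Representing vectors of the image under `M` of the standard `F_q`-subplane. -/
def subplaneVecs (M : Matrix (Fin 3) (Fin 3) F3) : Set (Fin 3 → F3) :=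
  {u | ∃ a : Fin 3 → Fq, u = M.mulVec fun i => algebraMap Fq F3 (a i)}

/-- The `F_q`-subplane `π̄` of `PG(2,q^3)` determined by the invertible matrix `M`:
the image under `M` of the standard rational subplane.  (Every `F_q`-subplane arises
in this way.) -/
def subplaneOf (M : Matrix (Fin 3) (Fin 3) F3) : Set (Pt2 F3) :=
  {P | ∃ u ∈ subplaneVecs Fq F3 M, pe P u}

/-- Representing vectors of the image under `M` of the standard `F_q`-conic. -/
def conicVecs (M : Matrix (Fin 3) (Fin 3) F3) : Set (Fin 3 → F3) :=
  {u | (∃ θ : Fq, u = M.mulVec fun i => algebraMap Fq F3 (![1, θ, θ ^ 2] i)) ∨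
    u = M.mulVec ![0, 0, 1]}

/-- The `F_q`-conic `C̄` of `PG(2,q^3)` determined by the invertible matrix `M`: the image
under `M` of the standard conic of the standard rational subplane.  (Every `F_q`-conic of
an `F_q`-subplane arises this way.) -/
def conicOf (M : Matrix (Fin 3) (Fin 3) F3) : Set (Pt2 F3) :=
  {P | ∃ u ∈ conicVecs Fq F3 M, pe P u}

/-- Representing vectors of `C̄⁺`, the unique `F_{q^3}`-conic containing `C̄ = conicOf M`. -/
def conicPlusVecs (M : Matrix (Fin 3) (Fin 3) F3) : Set (Fin 3 → F3) :=
  {u | (∃ θ : F3, u = M.mulVec ![1, θ, θ ^ 2]) ∨ u = M.mulVec ![0, 0, 1]}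

/-- `C̄⁺`, the unique non-degenerate conic of `PG(2,q^3)` containing `C̄ = conicOf M`. -/
def conicPlusOf (M : Matrix (Fin 3) (Fin 3) F3) : Set (Pt2 F3) :=
  {P | ∃ u ∈ conicPlusVecs F3 M, pe P u}

/-- Representing vectors of `C̄⁺⁺`, the unique conic of `PG(2,q^6)` containing `C̄⁺`. -/
def conicPPVecs (M : Matrix (Fin 3) (Fin 3) F3) : Set (Fin 3 → F6) :=
  {u | (∃ θ : F6, u = (M.map (algebraMap F3 F6)).mulVec ![1, θ, θ ^ 2]) ∨
    u = (M.map (algebraMap F3 F6)).mulVec ![0, 0, 1]}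

/-- `C̄⁺⁺`, the unique conic of the quadratic extension `PG(2,q^6)` containing `C̄⁺`. -/
def conicPPOf (M : Matrix (Fin 3) (Fin 3) F3) : Set (Pt2e F6) :=
  {P | ∃ u ∈ conicPPVecs F3 F6 M, pe P u}

/-- The subplane determined by `M` is secant to `ℓ∞` (meets it in `q+1` points). -/
def SecantSubplane (M : Matrix (Fin 3) (Fin 3) F3) : Prop :=
  (subplaneOf Fq F3 M ∩ linf F3).ncard = Fintype.card Fq + 1

/-- The subplane determined by `M` is tangent to `ℓ∞` (meets it in exactly one point). -/
def TangentSubplane (M : Matrix (Fin 3) (Fin 3) F3) : Prop :=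
  (subplaneOf Fq F3 M ∩ linf F3).ncard = 1

/-- The subplane determined by `M` is exterior to `ℓ∞` (disjoint from it). -/
def ExteriorSubplane (M : Matrix (Fin 3) (Fin 3) F3) : Prop :=
  subplaneOf Fq F3 M ∩ linf F3 = ∅

/-- The collineation `X ↦ B X^q` is a generator of the unique order-3 collineation group of
`PG(2,q^3)` fixing the subplane `subplaneOf M` pointwise (i.e. it is `c̄_π` or `c̄_π²`). -/
def IsCpiGen (M B : Matrix (Fin 3) (Fin 3) F3) : Prop :=
  IsUnit B.det ∧
  (∀ P ∈ subplaneOf Fq F3 M, pe P (cpiVec (Fintype.card Fq) B P.rep)) ∧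
  (∀ P : Pt2 F3, pe P ((cpiVec (Fintype.card Fq) B)^[3] P.rep)) ∧
  (∃ P : Pt2 F3, ¬ pe P (cpiVec (Fintype.card Fq) B P.rep))

/-- The map `X ↦ D X^q` on `ℓ∞` (coordinatised by pairs) is a generator of the unique
order-3 collineation group of `ℓ∞` fixing the `F_q`-subline `b̄ = subplaneOf M ∩ ℓ∞`
pointwise. -/
def IsCbGen (M : Matrix (Fin 3) (Fin 3) F3) (D : Matrix (Fin 2) (Fin 2) F3) : Prop :=
  IsUnit D.det ∧
  (∀ P ∈ subplaneOf Fq F3 M ∩ linf F3,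
    ∃ c : F3, c ≠ 0 ∧
      cbVec (Fintype.card Fq) D ![P.rep 0, P.rep 1] = c • ![P.rep 0, P.rep 1]) ∧
  (∀ u : Fin 2 → F3, u ≠ 0 → ∃ c : F3, c ≠ 0 ∧ (cbVec (Fintype.card Fq) D)^[3] u = c • u) ∧
  (∃ u : Fin 2 → F3, u ≠ 0 ∧ ¬ ∃ c : F3, c ≠ 0 ∧ cbVec (Fintype.card Fq) D u = c • u)

/-- `P' = P^{c̄_π}` where `c̄_π : X ↦ B X^q`. -/
def cptRel (B : Matrix (Fin 3) (Fin 3) F3) (P P' : Pt2 F3) : Prop :=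
  pe P' (cpiVec (Fintype.card Fq) B P.rep)

/-- `E` is one of the two `(π̄,ℓ∞)`-carriers lying on `ℓ∞` (for `π̄` exterior to `ℓ∞`):
`E ∈ ℓ∞` and the image of `E` under `c̄_π` or `c̄_π²` again lies on `ℓ∞`. -/
def IsCarrierOnLinf (B : Matrix (Fin 3) (Fin 3) F3) (E : Pt2 F3) : Prop :=
  E ∈ linf F3 ∧ ∃ E1 : Pt2 F3, cptRel Fq F3 B E E1 ∧ E1 ∈ linf F3

/-! ### The Bruck-Bose ambient spaces -/

/-- The 7-dimensional `Fq`-vector space underlying `PG(6,q)`. -/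
abbrev V6 := (Fin 2 → F3) × Fq

/-- The points of `PG(6,q)`. -/
abbrev Pt6 := Projectivization Fq (V6 Fq F3)

/-- The cubic extension of `V6`, underlying `PG(6,q^3)`. -/
abbrev V63 := (Fin 3 → Fin 2 → F3) × F3

/-- The points of `PG(6,q^3)`. -/
abbrev Pt63 := Projectivization F3 (V63 F3)

/-- The sextic extension of `V6`, underlying `PG(6,q^6)`. -/
abbrev V66 := (Fin 3 → Fin 2 → F6) × F6

/-- The points of `PG(6,q^6)`. -/
abbrev Pt66 := Projectivization F6 (V66 F6)

/-- The hyperplane at infinity `Σ∞` of `PG(6,q)` (as a point set). -/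
def inf6 : Set (Pt6 Fq F3) := {P | P.rep.2 = 0}

/-- The extended hyperplane at infinity `Σ∞^*` in `PG(6,q^3)`. -/
def inf63 : Set (Pt63 F3) := {P | P.rep.2 = 0}

/-- The extended hyperplane at infinity `Σ∞^☆` in `PG(6,q^6)`. -/
def inf66 : Set (Pt66 F6) := {P | P.rep.2 = 0}

/-- The vectors of the spread plane corresponding to the point `(x : y : 0)` of `ℓ∞`. -/
def spreadVecs (x y : F3) : Set (V6 Fq F3) := {v | ∃ l : F3, v = (![l * x, l * y], 0)}

/-- The points of the plane `[P]` of the regular 2-spread `S` corresponding to the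
point `P̄ = (x : y : 0)` of `ℓ∞`. -/
def spreadPts (x y : F3) : Set (Pt6 Fq F3) := {P | P.rep ∈ spreadVecs Fq F3 x y}

/-- `s` is (the point set of) a plane of the regular 2-spread `S`. -/
def IsSpreadPlane (s : Set (Pt6 Fq F3)) : Prop :=
  ∃ x y : F3, ¬(x = 0 ∧ y = 0) ∧ s = spreadPts Fq F3 x y

/-- The embedding of `V6` into its cubic extension `V63`. -/
def iota6 (v : V6 Fq F3) : V63 F3 :=
  (fun e k => v.1 k ^ Fintype.card Fq ^ (e : ℕ), algebraMap Fq F3 v.2)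

/-- The embedding of `V6` into its sextic extension `V66`. -/
def iota66 (v : V6 Fq F3) : V66 F6 :=
  (fun e k => algebraMap F3 F6 (v.1 k ^ Fintype.card Fq ^ (e : ℕ)), algebraMap Fq F6 v.2)

/-- The embedding of `V63` into `V66`. -/
def kappa6 (w : V63 F3) : V66 F6 :=
  (fun e k => algebraMap F3 F6 (w.1 e k), algebraMap F3 F6 w.2)

/-- A representing vector of `P^{q^e}` where `P` is the point of the transversal line `g`
with coordinate pair `(a,b) ∈ F_{q^3}²`. -/
def gOrbitVec3 (a b : F3) (e : Fin 3) : V63 F3 :=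
  gBlockVec e (a ^ Fintype.card Fq ^ (e : ℕ)) (b ^ Fintype.card Fq ^ (e : ℕ))

/-- A representing vector of `P^{q^e}` where `P` is the point of the extended transversal
line `g^☆` with coordinate pair `(a,b) ∈ F_{q^6}²`. -/
def gOrbitVec6 (a b : F6) (e : ℕ) : V66 F6 :=
  gBlockVec (Fin.ofNat 3 e) (a ^ Fintype.card Fq ^ e) (b ^ Fintype.card Fq ^ e)

/-- The vectors of the extension to `PG(6,q^3)` of the spread plane of `(x : y : 0)`. -/
def extSpreadVecs3 (x y : F3) : Set (V63 F3) :=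
  {w | ∃ c : Fin 3 → F3, w = (fun e =>
    ![c e * x ^ Fintype.card Fq ^ (e : ℕ), c e * y ^ Fintype.card Fq ^ (e : ℕ)], 0)}

/-- The vectors of the extension to `PG(6,q^6)` of the spread plane of `(x : y : 0)`. -/
def extSpreadVecs6 (x y : F3) : Set (V66 F6) :=
  {w | ∃ c : Fin 3 → F6, w = (fun e =>
    ![c e * algebraMap F3 F6 (x ^ Fintype.card Fq ^ (e : ℕ)),
      c e * algebraMap F3 F6 (y ^ Fintype.card Fq ^ (e : ℕ))], 0)}

/-- The point set in `PG(6,q)` of the `k`-dimensional normal rational curve with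
parametrising vectors `v 0, …, v k`:  `{(1,θ,…,θ^k)} ∪ {(0,…,0,1)}` in the frame `v`. -/
def nrcPts6 {k : ℕ} (v : Fin (k + 1) → V6 Fq F3) : Set (Pt6 Fq F3) :=
  {P | (∃ θ : Fq, pe P (∑ i : Fin (k + 1), θ ^ (i : ℕ) • v i)) ∨ pe P (v (Fin.last k))}

/-- The point set in `PG(6,q^3)` of the extension of the normal rational curve `v`. -/
def nrcPts63 {k : ℕ} (v : Fin (k + 1) → V6 Fq F3) : Set (Pt63 F3) :=
  {P | (∃ θ : F3, pe P (∑ i : Fin (k + 1), θ ^ (i : ℕ) • iota6 Fq F3 (v i))) ∨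
    pe P (iota6 Fq F3 (v (Fin.last k)))}

/-- The point set in `PG(6,q^6)` of the extension of the normal rational curve `v`. -/
def nrcPts66 {k : ℕ} (v : Fin (k + 1) → V6 Fq F3) : Set (Pt66 F6) :=
  {P | (∃ θ : F6, pe P (∑ i : Fin (k + 1), θ ^ (i : ℕ) • iota66 Fq F3 F6 (v i))) ∨
    pe P (iota66 Fq F3 F6 (v (Fin.last k)))}

/-- `N` is a `k`-dimensional normal rational curve of `PG(6,q)`. -/
def IsNRC (k : ℕ) (N : Set (Pt6 Fq F3)) : Prop :=
  ∃ v : Fin (k + 1) → V6 Fq F3, LinearIndependent Fq v ∧ N = nrcPts6 Fq F3 v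

/-- The exact-at-infinity Bruck-Bose representation `[C]` of a point set `C` of
`PG(2,q^3)`: affine points go to affine points, and a point of `ℓ∞` goes to the whole
corresponding spread plane. -/
def bbExact (C : Set (Pt2 F3)) : Set (Pt6 Fq F3) :=
  {Q | ∃ P ∈ C, (∃ x y : F3, pe P ![x, y, 1] ∧ pe Q (![x, y], (1 : Fq))) ∨
    (∃ x y : F3, pe P ![x, y, 0] ∧ Q ∈ spreadPts Fq F3 x y)}

/-- `N` is the Bruck-Bose representation (usual convention: linear components at infinity
ignored) of the point set `C` of `PG(2,q^3)`: `N` is contained in the exact-at-infinity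
representation of `C` and contains all of its affine points. -/
def corrBB (C : Set (Pt2 F3)) (N : Set (Pt6 Fq F3)) : Prop :=
  N ⊆ bbExact Fq F3 C ∧ ∀ Q ∈ bbExact Fq F3 C, Q ∉ inf6 Fq F3 → Q ∈ N

/-! ### The Bose ambient spaces -/

/-- The points of `PG(8,q^3)`. -/
abbrev Pt93 := Projectivization F3 (Fin 3 → Fin 3 → F3)

/-- The points of `PG(8,q^6)`. -/
abbrev Pt96 := Projectivization F6 (Fin 3 → Fin 3 → F6)

/-- The vectors of `Π_g^* = ⟨g, g^q, g^{q^2}⟩` in `PG(8,q^3)`, where `g` is the line of the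
transversal plane `Γ` corresponding to the line `l` of `PG(2,q^3)`. -/
def PiG3 (l : Submodule F3 (Fin 3 → F3)) : Set (Fin 3 → Fin 3 → F3) :=
  {w | ∀ e : Fin 3, ∃ v ∈ l, w e = fun i => v i ^ Fintype.card Fq ^ (e : ℕ)}

/-- The vectors of `Π_g^☆` in `PG(8,q^6)`. -/
def PiG6 (l : Submodule F3 (Fin 3 → F3)) : Set (Fin 3 → Fin 3 → F6) :=
  {w | ∀ e : Fin 3, w e ∈ Submodule.span F6
    {u : Fin 3 → F6 | ∃ v ∈ l, u = fun i => algebraMap F3 F6 (v i) ^ Fintype.card Fq ^ (e : ℕ)}}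

/-- The extension to `PG(2,q^6)` of the line `l` of `PG(2,q^3)`. -/
def extLineF6 (l : Submodule F3 (Fin 3 → F3)) : Submodule F6 (Fin 3 → F6) :=
  Submodule.span F6 {u | ∃ v ∈ l, u = fun i => algebraMap F3 F6 (v i)}

/-- The vectors of the point set of `V(⟦C⟧)^*` in `PG(8,q^3)` for the `F_q`-conic of `M`:
the union of the `π`-scroll planes of the points of `C⁺` (with `c_π` given by `B`). -/
def boseVar3 (M B : Matrix (Fin 3) (Fin 3) F3) : Set (Fin 3 → Fin 3 → F3) :=
  {w | ∃ u ∈ conicPlusVecs F3 M, w ∈ scrollSub (Fintype.card Fq) B u}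

/-- The vectors of the point set of `V(⟦C⟧)^☆` in `PG(8,q^6)`: the union of the
`π`-scroll planes of the points of `C⁺⁺`. -/
def boseVar6 (M B : Matrix (Fin 3) (Fin 3) F3) : Set (Fin 3 → Fin 3 → F6) :=
  {w | ∃ u ∈ conicPPVecs F3 F6 M,
    w ∈ scrollSub (Fintype.card Fq) (B.map (algebraMap F3 F6)) u}

/-- The point set of the variety-extension `V([C])^*` in `PG(6,q^3)`:
`V(⟦C⟧)^* ∩ Σ_{6,q}^*`, transported to the Bruck-Bose model via `ζ`. -/
def bbVar3 (M B : Matrix (Fin 3) (Fin 3) F3) : Set (Pt63 F3) :=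
  {P | zetaBB P.rep ∈ boseVar3 Fq F3 M B}

/-- The point set of the variety-extension `V([C])^☆` in `PG(6,q^6)`. -/
def bbVar6 (M B : Matrix (Fin 3) (Fin 3) F3) : Set (Pt66 F6) :=
  {P | zetaBB P.rep ∈ boseVar6 Fq F3 F6 M B}

/-- `L` is a T-line of `Σ∞^*`: a line meeting two of the transversal lines `g,g^q,g^{q^2}`
of the regular 2-spread. -/
def IsTLineBB (L : Submodule F3 (V63 F3)) : Prop :=
  ∃ (e e' : Fin 3) (a b a' b' : F3), e ≠ e' ∧ ¬(a = 0 ∧ b = 0) ∧ ¬(a' = 0 ∧ b' = 0) ∧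
    L = Submodule.span F3 {gBlockVec e a b, gBlockVec e' a' b'}

/-- The T-line `h^{q^e}` where `h = E (E^{c_π})^{q^2}`, `E` (resp. `E^{c_π}`) being the point
of the transversal `g` with coordinate pair `(a,b)` (resp. `(a',b')`). -/
def hLine (a b a' b' : F3) (e : Fin 3) : Submodule F3 (V63 F3) :=
  Submodule.span F3
    {gBlockVec e (a ^ Fintype.card Fq ^ (e : ℕ)) (b ^ Fintype.card Fq ^ (e : ℕ)),
     gBlockVec (e + 2) (a' ^ Fintype.card Fq ^ ((e : ℕ) + 2))
       (b' ^ Fintype.card Fq ^ ((e : ℕ) + 2))}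

/-! ### 3-special normal rational curves -/

/-- The pair `(a,b) ∈ F_{q^6}²` is proportional to an `F_{q^3}`-rational pair, i.e. the
corresponding point of the extended transversal line `g^☆` lies on `g`. -/
def rationalPair (a b : F6) : Prop :=
  ∃ (a0 b0 : F3) (c : F6), c ≠ 0 ∧ a = c * algebraMap F3 F6 a0 ∧ b = c * algebraMap F3 F6 b0

/-- The weight `w(P)` of a point `P` of `PG(5,q^6)` (given by a representing vector `w`):
1 if `P` is on an extended transversal line of the spread, 2 if not but `P` is on a line
meeting two of the extended transversal lines, 3 otherwise. -/
def weightV (w : V66 F6) : ℕ :=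
  if ∃ (e : Fin 3) (a b : F6), w = gBlockVec e a b then 1
  else if ∃ (e e' : Fin 3) (a b a' b' s t : F6), e ≠ e' ∧
      w = s • gBlockVec e a b + t • gBlockVec e' a' b' then 2
  else 3

/-- The orbit size `o(P)` of the point with representing vector `w` under the Frobenius
collineation `X ↦ X^q`. -/
def orbitSizeV (w : V66 F6) : ℕ :=
  Set.ncard {Q : Pt66 F6 | ∃ n : ℕ, pe Q ((tauBB (Fintype.card Fq))^[n] w)}

/-- `s(P) = 1` if `P` lies in an extended plane of the spread `S`, else `s(P) = 2`. -/
def sValV (w : V66 F6) : ℕ :=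
  if ∃ x y : F3, ¬(x = 0 ∧ y = 0) ∧ w ∈ extSpreadVecs6 Fq F3 F6 x y then 1 else 2

/-- The point of `PG(5,q^6)` with representing vector `w` is `S`-happy:
`w(P) ⬝ o(P) = 3 s(P)`. -/
def HappyV (w : V66 F6) : Prop :=
  weightV F6 w * orbitSizeV Fq F6 w = 3 * sValV Fq F3 F6 w

/-- The polynomial whose homogeneous roots give the points at infinity of the normal
rational curve parametrised by `v` (the last coordinates of the frame). -/
def infPoly {k : ℕ} (v : Fin (k + 1) → V6 Fq F3) : Polynomial Fq :=
  ∑ i : Fin (k + 1), Polynomial.C (v i).2 * Polynomial.X ^ (i : ℕ)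

/-- The parametrised normal rational curve `v` is 3-special with respect to the regular
2-spread `S`: it is not contained in `Σ∞`, all its points at infinity (with multiplicity,
including the point at the infinite parameter value) are defined over `F_{q^6}` and are
`S`-happy, and their weights sum to 6. -/
def Is3SpecialData {k : ℕ} (v : Fin (k + 1) → V6 Fq F3) : Prop :=
  infPoly Fq F3 v ≠ 0 ∧
  ((infPoly Fq F3 v).map (algebraMap Fq F6)).roots.card =
    ((infPoly Fq F3 v).map (algebraMap Fq F6)).natDegree ∧
  (∀ θ ∈ ((infPoly Fq F3 v).map (algebraMap Fq F6)).roots,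
    HappyV Fq F3 F6 (∑ i : Fin (k + 1), θ ^ (i : ℕ) • iota66 Fq F3 F6 (v i))) ∧
  (((infPoly Fq F3 v).map (algebraMap Fq F6)).natDegree < k →
    HappyV Fq F3 F6 (iota66 Fq F3 F6 (v (Fin.last k)))) ∧
  (((infPoly Fq F3 v).map (algebraMap Fq F6)).roots.map fun θ =>
      weightV F6 (∑ i : Fin (k + 1), θ ^ (i : ℕ) • iota66 Fq F3 F6 (v i))).sum +
    (k - ((infPoly Fq F3 v).map (algebraMap Fq F6)).natDegree) *
      weightV F6 (iota66 Fq F3 F6 (v (Fin.last k))) = 6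

/-- `N` is a 3-special `k`-dimensional normal rational curve of `PG(6,q)` with respect to
the regular 2-spread `S`. -/
def Is3Special (k : ℕ) (N : Set (Pt6 Fq F3)) : Prop :=
  ∃ v : Fin (k + 1) → V6 Fq F3, LinearIndependent Fq v ∧ N = nrcPts6 Fq F3 v ∧
    Is3SpecialData Fq F3 F6 v

end BruckBose

/-! ### Auxiliary lemmas for the proof -/

namespace SCEIAux

open Polynomial

variable {K : Type*} [Field K]

lemma pe_mk {V : Type*} [AddCommGroup V] [Module K V] (w : V) (hw : w ≠ 0) :
    pe (Projectivization.mk K w hw) w := by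
  obtain ⟨a, ha⟩ := Projectivization.exists_smul_eq_mk_rep K w hw
  exact ⟨(a : K), a.ne_zero, by rw [← ha]; rfl⟩

lemma pe_nonzero {V : Type*} [AddCommGroup V] [Module K V] {P : Projectivization K V} {w : V}
    (h : pe P w) : w ≠ 0 := by
  obtain ⟨c, hc, h⟩ := h
  rintro rfl
  exact P.rep_nonzero (by simpa using h)

lemma pe_eq_mk {V : Type*} [AddCommGroup V] [Module K V] {P : Projectivization K V} {w : V}
    (h : pe P w) (hw : w ≠ 0) : P = Projectivization.mk K w hw := by
  obtain ⟨c, hc, hrep⟩ := h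
  conv_lhs => rw [← Projectivization.mk_rep P]
  rw [Projectivization.mk_eq_mk_iff]
  exact ⟨Units.mk0 c hc, hrep.symm⟩

lemma pe_unique {V : Type*} [AddCommGroup V] [Module K V] {P P' : Projectivization K V} {w : V}
    (h : pe P w) (h' : pe P' w) : P = P' := by
  rw [pe_eq_mk h (pe_nonzero h), pe_eq_mk h' (pe_nonzero h)]

lemma pe_smul {V : Type*} [AddCommGroup V] [Module K V] {P : Projectivization K V} {w : V}
    (h : pe P w) {d : K} (hd : d ≠ 0) : pe P (d • w) := by
  obtain ⟨c, hc, hrep⟩ := h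
  exact ⟨c * d⁻¹, by simp [hc, hd], by
    rw [hrep, smul_smul, mul_assoc, inv_mul_cancel₀ hd, mul_one]⟩

lemma frob_mulVec {m n q : ℕ} {σ : K →+* K} (hσ : ∀ x : K, σ x = x ^ q)
    (A : Matrix (Fin m) (Fin n) K) (v : Fin n → K) :
    (fun i => (A.mulVec v) i ^ q) = (A.map σ).mulVec (fun i => v i ^ q) := by
  funext i
  simp only [Matrix.mulVec, dotProduct, Matrix.map_apply, ← hσ, map_sum, map_mul]

lemma map_matrix_inv {L : Type*} [Field L] {n : ℕ} (σ : K →+* L) (A : Matrix (Fin n) (Fin n) K) (h : IsUnit A.det) :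
    (A⁻¹).map σ = (A.map σ)⁻¹ := by
  symm
  apply Matrix.inv_eq_right_inv
  rw [← Matrix.map_mul, Matrix.mul_nonsing_inv _ h]
  simp [Matrix.map_one σ (map_zero σ) (map_one σ)]

lemma det_map_unit {L : Type*} [Field L] {n : ℕ} (σ : K →+* L) {A : Matrix (Fin n) (Fin n) K} (h : IsUnit A.det) :
    IsUnit (A.map σ).det := by
  have : (A.map σ).det = σ A.det := by
    rw [show A.map σ = σ.mapMatrix A from rfl, ← RingHom.map_det]
  rw [this]
  exact h.map σ

lemma mulVec_inj {n : ℕ} {A : Matrix (Fin n) (Fin n) K} (h : IsUnit A.det) :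
    Function.Injective A.mulVec := by
  intro x y hxy
  have := congrArg (A⁻¹.mulVec) hxy
  rwa [Matrix.mulVec_mulVec, Matrix.mulVec_mulVec, Matrix.nonsing_inv_mul _ h,
    Matrix.one_mulVec, Matrix.one_mulVec] at this

lemma mulVec3 (A : Matrix (Fin 3) (Fin 3) K) (v : Fin 3 → K) (i : Fin 3) :
    A.mulVec v i = A i 0 * v 0 + A i 1 * v 1 + A i 2 * v 2 := by
  simp [Matrix.mulVec, dotProduct, Fin.sum_univ_three]

lemma mulVec2 (A : Matrix (Fin 2) (Fin 2) K) (v : Fin 2 → K) (i : Fin 2) :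
    A.mulVec v i = A i 0 * v 0 + A i 1 * v 1 := by
  simp [Matrix.mulVec, dotProduct, Fin.sum_univ_two]

lemma map_mulVec {L : Type*} [Field L] {m n : ℕ} (f : K →+* L) (A : Matrix (Fin m) (Fin n) K)
    (v : Fin n → K) :
    (A.map f).mulVec (fun i => f (v i)) = fun i => f (A.mulVec v i) := by
  funext i
  simp only [Matrix.mulVec, dotProduct, Matrix.map_apply, map_sum, map_mul]

lemma pow_smul_vec {n : Type*} {q : ℕ} (c : K) (v : n → K) :
    (fun i => (c • v) i ^ q) = c ^ q • fun i => v i ^ q := by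
  funext i
  simp [mul_pow]

lemma step_mulVec {m q : ℕ} {σ : K →+* K} (hσ : ∀ x : K, σ x = x ^ q)
    (A X : Matrix (Fin m) (Fin m) K) (w : Fin m → K) :
    A.mulVec (fun i => (X.mulVec w) i ^ q) = (A * X.map σ).mulVec (fun i => w i ^ q) := by
  rw [frob_mulVec hσ, Matrix.mulVec_mulVec]

lemma cpi_iter3 {q : ℕ} {σ : K →+* K} (hσ : ∀ x : K, σ x = x ^ q)
    (hfix : ∀ x : K, x ^ (q * (q * q)) = x) (A : Matrix (Fin 3) (Fin 3) K)
    (hA : A * A.map σ * (A.map σ).map σ = 1) (v : Fin 3 → K) :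
    (cpiVec q A)^[3] v = v := by
  have h0 : (cpiVec q A)^[3] v = cpiVec q A (cpiVec q A (cpiVec q A v)) := by
    simp [Function.iterate_succ, Function.comp]
  rw [h0]
  show A.mulVec _ = v
  rw [show cpiVec q A (cpiVec q A v) =
      (A * A.map σ).mulVec (fun i => (v i ^ q) ^ q) from step_mulVec hσ A A _,
    show (A.mulVec fun i => ((A * A.map σ).mulVec fun i => (v i ^ q) ^ q) i ^ q) =
      (A * ((A * A.map σ).map σ)).mulVec (fun i => ((v i ^ q) ^ q) ^ q) from
        step_mulVec hσ A _ _,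
    Matrix.map_mul, ← mul_assoc, hA, Matrix.one_mulVec]
  funext i
  rw [← pow_mul, ← pow_mul, hfix]

lemma cb_iter3 {q : ℕ} {σ : K →+* K} (hσ : ∀ x : K, σ x = x ^ q)
    (hfix : ∀ x : K, x ^ (q * (q * q)) = x) (A : Matrix (Fin 2) (Fin 2) K)
    (hA : A * A.map σ * (A.map σ).map σ = 1) (v : Fin 2 → K) :
    (cbVec q A)^[3] v = v := by
  have h0 : (cbVec q A)^[3] v = cbVec q A (cbVec q A (cbVec q A v)) := by
    simp [Function.iterate_succ, Function.comp]
  rw [h0]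
  show A.mulVec _ = v
  rw [show cbVec q A (cbVec q A v) =
      (A * A.map σ).mulVec (fun i => (v i ^ q) ^ q) from step_mulVec hσ A A _,
    show (A.mulVec fun i => ((A * A.map σ).mulVec fun i => (v i ^ q) ^ q) i ^ q) =
      (A * ((A * A.map σ).map σ)).mulVec (fun i => ((v i ^ q) ^ q) ^ q) from
        step_mulVec hσ A _ _,
    Matrix.map_mul, ← mul_assoc, hA, Matrix.one_mulVec]
  funext i
  rw [← pow_mul, ← pow_mul, hfix]

/-- upper-left 2×2 block of a 3×3 matrix -/
def blk (A : Matrix (Fin 3) (Fin 3) K) : Matrix (Fin 2) (Fin 2) K :=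
  Matrix.of fun k l => A (Fin.castSucc k) (Fin.castSucc l)

lemma pair_mulVec (A : Matrix (Fin 3) (Fin 3) K) (w : Fin 3 → K) (hw : w 2 = 0) (k : Fin 2) :
    (blk A).mulVec ![w 0, w 1] k = A.mulVec w (Fin.castSucc k) := by
  rw [mulVec2, mulVec3, hw]
  simp [blk, show (Fin.castSucc (0 : Fin 2)) = (0 : Fin 3) from rfl,
    show (Fin.castSucc (1 : Fin 2)) = (1 : Fin 3) from rfl]

lemma blk_mul (A C : Matrix (Fin 3) (Fin 3) K) (hC0 : C 2 0 = 0) (hC1 : C 2 1 = 0) :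
    blk (A * C) = blk A * blk C := by
  ext k l
  rw [Matrix.mul_apply]
  simp only [blk, Matrix.of_apply, Matrix.mul_apply, Fin.sum_univ_three, Fin.sum_univ_two]
  rw [show ((0 : Fin 3)) = Fin.castSucc (0 : Fin 2) from rfl,
    show ((1 : Fin 3)) = Fin.castSucc (1 : Fin 2) from rfl]
  fin_cases l <;>
    simp [show (Fin.castSucc (0 : Fin 2)) = (0 : Fin 3) from rfl,
      show (Fin.castSucc (1 : Fin 2)) = (1 : Fin 3) from rfl, hC0, hC1]

lemma blk_one : blk (1 : Matrix (Fin 3) (Fin 3) K) = 1 := by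
  ext k l
  simp [blk, Matrix.one_apply, Fin.castSucc_inj]

lemma blk_map (σ : K →+* K) (A : Matrix (Fin 3) (Fin 3) K) :
    blk (A.map σ) = (blk A).map σ := rfl

variable [Fintype K]

lemma fix_card_le {m : ℕ} (hm : 1 < m) (s : Finset K) (hs : ∀ x ∈ s, x ^ m = x) :
    s.card ≤ m := by
  have hne : (X ^ m - X : K[X]) ≠ 0 := FiniteField.X_pow_card_sub_X_ne_zero K hm
  have hsub : s ⊆ (X ^ m - X : K[X]).roots.toFinset := by
    intro x hx
    rw [Multiset.mem_toFinset, mem_roots hne]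
    simp [IsRoot.def, hs x hx, sub_eq_zero]
  calc s.card ≤ _ := Finset.card_le_card hsub
    _ ≤ (X ^ m - X : K[X]).roots.card := Multiset.toFinset_card_le _
    _ ≤ (X ^ m - X : K[X]).natDegree := Polynomial.card_roots' _
    _ = m := FiniteField.X_pow_card_sub_X_natDegree_eq K hm

lemma exists_nonfix {m : ℕ} (hm1 : 1 < m) (hm : m < Fintype.card K) : ∃ x : K, x ^ m ≠ x := by
  by_contra hall
  push_neg at hall
  have := fix_card_le hm1 (Finset.univ : Finset K) (fun x _ => hall x)
  rw [Finset.card_univ] at this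
  omega

lemma fixed_mem_image {L : Type*} [Field L] [Fintype L] (f : K →+* L) {x : L}
    (hx : x ^ Fintype.card K = x) : ∃ y : K, f y = x := by
  have h1 : (1 : ℕ) < Fintype.card K := Fintype.one_lt_card
  set A : Finset L := Finset.univ.image f with hA
  set B : Finset L := Finset.univ.filter (fun z : L => z ^ Fintype.card K = z) with hB
  have hAB : A ⊆ B := by
    intro z hz
    simp only [hA, Finset.mem_image] at hz
    obtain ⟨y, _, rfl⟩ := hz
    simp only [hB, Finset.mem_filter, Finset.mem_univ, true_and]
    rw [← map_pow, FiniteField.pow_card]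
  have hcardA : A.card = Fintype.card K := by
    rw [hA, Finset.card_image_of_injective _ f.injective, Finset.card_univ]
  have hcardB : B.card ≤ Fintype.card K := by
    apply fix_card_le h1
    intro z hz
    simpa [hB] using (Finset.mem_filter.mp hz).2
  have hABeq : A = B := Finset.eq_of_subset_of_card_le hAB (by omega)
  have hxB : x ∈ B := by simp [hB, hx]
  rw [← hABeq] at hxB
  simpa [hA] using hxB

/-- root of a quadratic with no roots in `K`, in the degree-6 extension -/
lemma exists_quadratic_root {L : Type*} [Field L] [Fintype L] (f : K →+* L)
    (hcard : Fintype.card L = Fintype.card K ^ 6) (b c : K)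
    (hroot : ∀ x : K, x ^ 2 + b * x + c ≠ 0) :
    ∃ θ : L, θ ^ 2 + f b * θ + f c = 0 := by
  set q := Fintype.card K with hq
  set h' : K[X] := X ^ 2 + (C b * X + C c) with hh'
  have hdeglin : (C b * X + C c).degree ≤ 1 := degree_linear_le
  have hdeglt : (C b * X + C c).degree < 2 := lt_of_le_of_lt hdeglin (by norm_num)
  have hmonic : h'.Monic :=
    Polynomial.monic_X_pow_add (n := 2) (p := C b * X + C c) hdeglt
  have hdeg : h'.degree = 2 := by
    rw [hh', degree_add_eq_left_of_degree_lt]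
    · simp
    · rw [degree_X_pow]
      exact hdeglt
  have hndeg : h'.natDegree = 2 := natDegree_eq_of_degree_eq_some hdeg
  have hcoeff0 : h'.coeff 0 = c := by simp [hh', coeff_X_pow]
  have hcoeff1 : h'.coeff 1 = b := by simp [hh', coeff_X_pow]
  have hirr : Irreducible h' := by
    by_contra hni
    obtain ⟨c₁, c₂, h0, h1⟩ :=
      (hmonic.not_irreducible_iff_exists_add_mul_eq_coeff hndeg).mp hni
    apply hroot (-c₁)
    rw [hcoeff0] at h0
    rw [hcoeff1] at h1
    rw [h0, h1]
    ring
  haveI := Fact.mk hirr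
  have hne : h' ≠ 0 := hmonic.ne_zero
  set pb := AdjoinRoot.powerBasis hne with hpb
  haveI : Fintype (AdjoinRoot h') := Module.fintypeOfFintype pb.basis
  have hdim : pb.dim = 2 := by
    rw [hpb, AdjoinRoot.powerBasis_dim, hndeg]
  have hcardA : Fintype.card (AdjoinRoot h') = q ^ 2 := by
    rw [Module.card_fintype pb.basis, Fintype.card_fin, hdim, hq]
  set r := AdjoinRoot.root h' with hr
  have hr2 : r ^ q ^ 2 = r := by rw [← hcardA]; exact FiniteField.pow_card r
  have hr6 : r ^ q ^ 6 = r := by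
    have : q ^ 6 = q ^ 2 * q ^ 2 * q ^ 2 := by ring
    rw [this, pow_mul, pow_mul, hr2, hr2, hr2]
  have hdvd : h' ∣ (X ^ q ^ 6 - X : K[X]) := by
    rw [← AdjoinRoot.mk_eq_zero]
    rw [map_sub, map_pow, AdjoinRoot.mk_X]
    rw [sub_eq_zero]
    exact hr6
  have hdvd6 : h'.map f ∣ (X ^ Fintype.card L - X : L[X]) := by
    have := Polynomial.map_dvd f hdvd
    rw [hcard]
    rwa [Polynomial.map_sub, Polynomial.map_pow, Polynomial.map_X] at this
  have h1L : (1 : ℕ) < Fintype.card L := Fintype.one_lt_card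
  have hsplits : ((X ^ Fintype.card L - X : L[X])).Splits := by
    rw [splits_iff_card_roots, FiniteField.roots_X_pow_card_sub_X L,
      FiniteField.X_pow_card_sub_X_natDegree_eq L h1L]
    simp [← Finset.card_def]
  have hsp : (h'.map f).Splits :=
    Splits.of_dvd hsplits (FiniteField.X_pow_card_sub_X_ne_zero L h1L) hdvd6
  have hdegmap : (h'.map f).degree ≠ 0 := by
    rw [degree_map_eq_of_injective f.injective, hdeg]
    norm_num
  obtain ⟨θ, hθ⟩ := Polynomial.Splits.exists_eval_eq_zero hsp hdegmap
  refine ⟨θ, ?_⟩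
  rw [hh'] at hθ
  have h2 := by simpa [Polynomial.eval₂_map, Polynomial.eval_map] using hθ
  linear_combination (h2 : θ ^ 2 + (f b * θ + f c) = 0)

end SCEIAux



set_option maxHeartbeats 1600000 in
/-- Result 3.2, case [S3]: for an `F_q`-conic `C̄` in a secant
`F_q`-subplane with `C̄⁺` exterior to `ℓ∞`, the conic `C̄⁺⁺` meets `ℓ∞⁺⁺` in two distinct
non-rational points `P̄, Q̄` with `Q̄ = P̄^{c̄_π} = P̄^{q³}`, `P̄^{c̄_π²} = P̄` and
`P̄^{c̄_b} = Q̄` where `b̄ = π̄ ∩ ℓ∞`. -/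
theorem secant_conic_exterior_infinity (Fq F3 F6 : Type) [Field Fq] [Field F3] [Field F6]
    [Fintype Fq] [Fintype F3] [Fintype F6]
    [Algebra Fq F3] [Algebra F3 F6] [Algebra Fq F6] [IsScalarTower Fq F3 F6]
    (h3 : Fintype.card F3 = Fintype.card Fq ^ 3)
    (h6 : Fintype.card F6 = Fintype.card Fq ^ 6)
    (M : Matrix (Fin 3) (Fin 3) F3) (hM : IsUnit M.det)
    (hsec : SecantSubplane Fq F3 M)
    (hext : conicPlusOf F3 M ∩ linf F3 = ∅) :
    conicOf Fq F3 M ∩ linf F3 = ∅ ∧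
    ∃ Pb Qb : Pt2e F6, Pb ≠ Qb ∧ Pb ∈ linfe F6 ∧ Qb ∈ linfe F6 ∧
      (¬ ∃ (u : Fin 3 → F3) (c : F6), c ≠ 0 ∧
        Pb.rep = c • fun i => algebraMap F3 F6 (u i)) ∧
      (¬ ∃ (u : Fin 3 → F3) (c : F6), c ≠ 0 ∧
        Qb.rep = c • fun i => algebraMap F3 F6 (u i)) ∧
      conicPPOf F3 F6 M ∩ linfe F6 = {Pb, Qb} ∧
      ∃ B : Matrix (Fin 3) (Fin 3) F3, IsCpiGen Fq F3 M B ∧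
        pe Qb (cpiVec (Fintype.card Fq) (B.map (algebraMap F3 F6)) Pb.rep) ∧
        pe Qb (fun i => Pb.rep i ^ Fintype.card Fq ^ 3) ∧
        pe Pb ((cpiVec (Fintype.card Fq) (B.map (algebraMap F3 F6)))^[2] Pb.rep) ∧
        ∃ D : Matrix (Fin 2) (Fin 2) F3, IsCbGen Fq F3 M D ∧
          ∃ a b a' b' : F6, pe Pb ![a, b, 0] ∧ pe Qb ![a', b', 0] ∧
            ∃ c : F6, c ≠ 0 ∧
              cbVec (Fintype.card Fq) (D.map (algebraMap F3 F6)) ![a, b] = c • ![a', b'] := by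
  classical
  -- ## setup: Frobenius homomorphisms
  set q := Fintype.card Fq with hqdef
  have hq1 : 1 < q := Fintype.one_lt_card
  have hq0 : q ≠ 0 := by omega
  set p := ringChar Fq with hpdef
  haveI hCp : CharP Fq p := ringChar.charP Fq
  have hp : p.Prime := CharP.char_is_prime Fq p
  haveI := Fact.mk hp
  obtain ⟨n, hpp, hn⟩ := FiniteField.card Fq p
  rw [← hqdef] at hn
  haveI : CharP F3 p := charP_of_injective_algebraMap (algebraMap Fq F3).injective p
  haveI : CharP F6 p := charP_of_injective_algebraMap (algebraMap Fq F6).injective p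
  haveI : ExpChar F3 p := ExpChar.prime hp
  haveI : ExpChar F6 p := ExpChar.prime hp
  set σ3 : F3 →+* F3 := iterateFrobenius F3 p (n : ℕ) with hσ3def
  have hσ3 : ∀ x : F3, σ3 x = x ^ q := fun x => by
    rw [hσ3def, iterateFrobenius_def, ← hn]
  set σ6 : F6 →+* F6 := iterateFrobenius F6 p (n : ℕ) with hσ6def
  have hσ6 : ∀ x : F6, σ6 x = x ^ q := fun x => by
    rw [hσ6def, iterateFrobenius_def, ← hn]
  set σ63 : F6 →+* F6 := iterateFrobenius F6 p ((n : ℕ) * 3) with hσ63def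
  have hσ63 : ∀ x : F6, σ63 x = x ^ q ^ 3 := fun x => by
    rw [hσ63def, iterateFrobenius_def, hn, ← pow_mul]
  set ι3 : Fq →+* F3 := algebraMap Fq F3 with hι3def
  set ι36 : F3 →+* F6 := algebraMap F3 F6 with hι36def
  set ι6 : Fq →+* F6 := algebraMap Fq F6 with hι6def
  have htower : ∀ x : Fq, ι36 (ι3 x) = ι6 x := fun x =>
    (IsScalarTower.algebraMap_apply Fq F3 F6 x).symm
  have hfix3 : ∀ x : Fq, (ι3 x) ^ q = ι3 x := fun x => by
    rw [← map_pow, hqdef, FiniteField.pow_card]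
  have hfix6 : ∀ x : Fq, (ι6 x) ^ q = ι6 x := fun x => by
    rw [← map_pow, hqdef, FiniteField.pow_card]
  have hfixF3 : ∀ x : F3, x ^ q ^ 3 = x := fun x => by
    rw [← h3, FiniteField.pow_card]
  have hfixF3' : ∀ x : F3, x ^ (q * (q * q)) = x := fun x => by
    rw [show q * (q * q) = q ^ 3 by ring, hfixF3]
  have hfix36 : ∀ x : F3, (ι36 x) ^ q ^ 3 = ι36 x := fun x => by
    rw [← map_pow, hfixF3]
  have hfixF6 : ∀ x : F6, x ^ (q ^ 6) = x := fun x => by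
    rw [← h6, FiniteField.pow_card]
  have hσ6inj : Function.Injective (fun x : F6 => x ^ q) := by
    intro x y hxy
    have : σ6 x = σ6 y := by rw [hσ6, hσ6]; exact hxy
    exact σ6.injective this
  -- ## matrices
  set M6 : Matrix (Fin 3) (Fin 3) F6 := M.map ι36 with hM6def
  have hM6det : IsUnit M6.det := by rw [hM6def]; exact SCEIAux.det_map_unit ι36 hM
  set Mσ : Matrix (Fin 3) (Fin 3) F3 := M.map σ3 with hMσdef
  have hMσdet : IsUnit Mσ.det := by rw [hMσdef]; exact SCEIAux.det_map_unit σ3 hM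
  set Mσσ : Matrix (Fin 3) (Fin 3) F3 := Mσ.map σ3 with hMσσdef
  have hMσσdet : IsUnit Mσσ.det := by rw [hMσσdef]; exact SCEIAux.det_map_unit σ3 hMσdet
  set B : Matrix (Fin 3) (Fin 3) F3 := M * Mσ⁻¹ with hBdef
  have hBMσ : B * Mσ = M := by
    rw [hBdef, Matrix.mul_assoc, Matrix.nonsing_inv_mul _ hMσdet, Matrix.mul_one]
  have hBinvr : B * (Mσ * M⁻¹) = 1 := by
    rw [← Matrix.mul_assoc, hBMσ, Matrix.mul_nonsing_inv _ hM]
  have hBdet : IsUnit B.det := IsUnit.of_mul_eq_one _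
    (by rw [← Matrix.det_mul, hBinvr, Matrix.det_one])
  have hMσσσ : Mσσ.map σ3 = M := by
    ext i j
    simp only [hMσσdef, hMσdef, Matrix.map_apply]
    rw [hσ3, hσ3, hσ3, ← pow_mul, ← pow_mul]
    exact hfixF3' _
  have hBσ : B.map σ3 = Mσ * Mσσ⁻¹ := by
    rw [hBdef, Matrix.map_mul, SCEIAux.map_matrix_inv σ3 Mσ hMσdet]
  have hBσσ : (B.map σ3).map σ3 = Mσσ * M⁻¹ := by
    rw [hBσ, Matrix.map_mul, SCEIAux.map_matrix_inv σ3 Mσσ hMσσdet, hMσσσ]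
  have hB3 : B * B.map σ3 * (B.map σ3).map σ3 = 1 := by
    rw [hBσσ, hBσ, hBdef]
    calc M * Mσ⁻¹ * (Mσ * Mσσ⁻¹) * (Mσσ * M⁻¹)
        = M * (Mσ⁻¹ * Mσ) * (Mσσ⁻¹ * Mσσ) * M⁻¹ := by
          simp only [Matrix.mul_assoc]
      _ = 1 := by
          rw [Matrix.nonsing_inv_mul _ hMσdet, Matrix.nonsing_inv_mul _ hMσσdet,
            Matrix.mul_one, Matrix.mul_one, Matrix.mul_nonsing_inv _ hM]
  -- key identity : B ⬝ (M ιa)^q = M ιa  for rational vectors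
  have hkey3 : ∀ av : Fin 3 → Fq,
      B.mulVec (fun i => (M.mulVec fun j => ι3 (av j)) i ^ q) =
        M.mulVec (fun j => ι3 (av j)) := by
    intro av
    rw [SCEIAux.step_mulVec hσ3 B M _, hBMσ]
    have : (fun i => ι3 (av i) ^ q) = fun j => ι3 (av j) := by
      funext i
      exact hfix3 (av i)
    rw [this]
  -- ## secancy : row 2 of M is a common multiple of F_q elements
  obtain ⟨lam, t, hlam0, ht⟩ :
      ∃ (lam : F3) (t : Fin 3 → Fq), lam ≠ 0 ∧ ∀ j, M 2 j = ι3 (t j) * lam := by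
    haveI hfinPt : Finite (Pt2 F3) := Quotient.finite _
    have hsec' : (subplaneOf Fq F3 M ∩ linf F3).ncard = q + 1 := hsec
    have hS2 : 1 < (subplaneOf Fq F3 M ∩ linf F3).ncard := by rw [hsec']; omega
    obtain ⟨P, hP, P', hP', hPP'⟩ := (Set.one_lt_ncard (Set.toFinite _)).mp hS2
    obtain ⟨⟨u, ⟨av, rfl⟩, hpeP⟩, hPl⟩ := hP
    obtain ⟨⟨u', ⟨av', rfl⟩, hpeP'⟩, hP'l⟩ := hP'
    obtain ⟨c, hc, hrep⟩ := hpeP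
    obtain ⟨c', hc', hrep'⟩ := hpeP'
    have hu2 : M.mulVec (fun i => ι3 (av i)) 2 = 0 := by
      have h2 : P.rep 2 = 0 := hPl
      rw [hrep] at h2
      simpa [hc] using h2
    have hu'2 : M.mulVec (fun i => ι3 (av' i)) 2 = 0 := by
      have h2 : P'.rep 2 = 0 := hP'l
      rw [hrep'] at h2
      simpa [hc'] using h2
    have havne : av ≠ 0 := by
      rintro rfl
      apply P.rep_nonzero
      rw [hrep]
      have : (fun i => ι3 ((0 : Fin 3 → Fq) i)) = 0 := by funext i; simp
      rw [this, Matrix.mulVec_zero, smul_zero]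
    have hav'ne : av' ≠ 0 := by
      rintro rfl
      apply P'.rep_nonzero
      rw [hrep']
      have : (fun i => ι3 ((0 : Fin 3 → Fq) i)) = 0 := by funext i; simp
      rw [this, Matrix.mulVec_zero, smul_zero]
    have hIndep : LinearIndependent Fq ![av', av] := by
      rw [linearIndependent_fin2]
      refine ⟨by simpa using havne, ?_⟩
      intro s hs
      simp only [Matrix.cons_val_one, Matrix.head_cons, Matrix.cons_val_zero] at hs
      have hs0 : s ≠ 0 := by
        rintro rfl
        apply hav'ne
        rw [← hs, zero_smul]
      apply hPP'
      have hvec : (fun i => ι3 (av' i)) = ι3 s • fun i => ι3 (av i) := by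
        funext i
        rw [← hs]
        simp [map_mul]
      have hprop : M.mulVec (fun i => ι3 (av' i)) = ι3 s • M.mulVec (fun i => ι3 (av i)) := by
        rw [hvec, Matrix.mulVec_smul]
      have hs0' : ι3 s ≠ 0 := fun h => hs0 (ι3.injective (by rw [h, map_zero]))
      have hpe1 : pe P' (M.mulVec fun i => ι3 (av i)) :=
        ⟨c' * ι3 s, mul_ne_zero hc' hs0', by rw [hrep', hprop, smul_smul]⟩
      exact SCEIAux.pe_unique ⟨c, hc, hrep⟩ hpe1
    set L : (Fin 3 → Fq) →ₗ[Fq] F3 := {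
      toFun := fun a => M.mulVec (fun i => ι3 (a i)) 2
      map_add' := by
        intro a b
        show M.mulVec (fun i => ι3 ((a + b) i)) 2 =
          M.mulVec (fun i => ι3 (a i)) 2 + M.mulVec (fun i => ι3 (b i)) 2
        rw [SCEIAux.mulVec3, SCEIAux.mulVec3, SCEIAux.mulVec3]
        simp only [Pi.add_apply, map_add]
        ring
      map_smul' := by
        intro s a
        show M.mulVec (fun i => ι3 ((s • a) i)) 2 =
          (RingHom.id Fq) s • M.mulVec (fun i => ι3 (a i)) 2
        rw [SCEIAux.mulVec3, SCEIAux.mulVec3]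
        simp only [Pi.smul_apply, smul_eq_mul, map_mul, RingHom.id_apply, Algebra.smul_def]
        ring } with hLdef
    have hLapply : ∀ a : Fin 3 → Fq, L a = M.mulVec (fun i => ι3 (a i)) 2 := fun a => rfl
    have hspan : Submodule.span Fq (Set.range ![av', av]) ≤ LinearMap.ker L := by
      rw [Submodule.span_le]
      rintro x ⟨i, rfl⟩
      fin_cases i
      · exact LinearMap.mem_ker.mpr hu'2
      · exact LinearMap.mem_ker.mpr hu2
    have hfr2 : 2 ≤ Module.finrank Fq (LinearMap.ker L) := by
      have h1 := finrank_span_eq_card (R := Fq) hIndep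
      have h2 : Module.finrank Fq (Submodule.span Fq (Set.range ![av', av])) = 2 := by
        rw [h1]
        simp
      calc 2 = _ := h2.symm
        _ ≤ _ := Submodule.finrank_mono hspan
    have hrn := LinearMap.finrank_range_add_finrank_ker L
    have hpi : Module.finrank Fq (Fin 3 → Fq) = 3 := by
      rw [Module.finrank_pi]
      simp
    rw [hpi] at hrn
    have hfr1 : Module.finrank Fq (LinearMap.range L) ≤ 1 := by omega
    obtain ⟨lam, hlamspan⟩ :=
      ((LinearMap.range L).finrank_le_one_iff_isPrincipal.mp hfr1).principal
    have hMj : ∀ j, ∃ s : Fq, M 2 j = ι3 s * lam := by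
      intro j
      have hmem : M 2 j ∈ LinearMap.range L := by
        refine ⟨Pi.single j 1, ?_⟩
        rw [hLapply, SCEIAux.mulVec3]
        fin_cases j <;> simp [Pi.single_apply]
      rw [hlamspan, Submodule.mem_span_singleton] at hmem
      obtain ⟨s, hs⟩ := hmem
      exact ⟨s, by rw [← hs, Algebra.smul_def]⟩
    choose t ht using hMj
    have hlam0 : lam ≠ 0 := by
      rintro rfl
      have hdet0 : M.det = 0 := Matrix.det_eq_zero_of_row_eq_zero 2 (fun j => by
        rw [ht j, mul_zero])
      rw [hdet0] at hM
      exact not_isUnit_zero hM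
    exact ⟨lam, t, hlam0, ht⟩
  -- M 2 2 ≠ 0 and t 2 ≠ 0, no F3-roots
  have hnoF3root : ∀ x : F3, M 2 0 + M 2 1 * x + M 2 2 * x ^ 2 ≠ 0 := by
    intro x hx
    have hvne : M.mulVec ![1, x, x ^ 2] ≠ 0 := by
      intro h0
      have := SCEIAux.mulVec_inj hM (by rw [h0, Matrix.mulVec_zero] :
        M.mulVec ![1, x, x ^ 2] = M.mulVec 0)
      simpa using congrFun this 0
    have hmem : Projectivization.mk F3 _ hvne ∈ conicPlusOf F3 M ∩ linf F3 := by
      constructor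
      · exact ⟨M.mulVec ![1, x, x ^ 2], Or.inl ⟨x, rfl⟩, SCEIAux.pe_mk (K := F3) _ hvne⟩
      · obtain ⟨c, hc, hrep⟩ := SCEIAux.pe_mk (K := F3) (M.mulVec ![1, x, x ^ 2]) hvne
        show _ = 0
        rw [hrep]
        have h2 : M.mulVec ![1, x, x ^ 2] 2 = 0 := by
          rw [SCEIAux.mulVec3]
          simpa using hx
        simp [h2]
    rw [hext] at hmem
    exact hmem
  have hM22 : M 2 2 ≠ 0 := by
    intro h22
    have hvne : M.mulVec ![0, 0, 1] ≠ 0 := by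
      intro h0
      have := SCEIAux.mulVec_inj hM (by rw [h0, Matrix.mulVec_zero] :
        M.mulVec ![0, 0, 1] = M.mulVec 0)
      simpa using congrFun this 2
    have hmem : Projectivization.mk F3 _ hvne ∈ conicPlusOf F3 M ∩ linf F3 := by
      constructor
      · exact ⟨M.mulVec ![0, 0, 1], Or.inr rfl, SCEIAux.pe_mk (K := F3) _ hvne⟩
      · obtain ⟨c, hc, hrep⟩ := SCEIAux.pe_mk (K := F3) (M.mulVec ![0, 0, 1]) hvne
        show _ = 0
        rw [hrep]
        have h2 : M.mulVec ![0, 0, 1] 2 = 0 := by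
          rw [SCEIAux.mulVec3]
          simp [h22]
        simp [h2]
    rw [hext] at hmem
    exact hmem
  have ht2 : t 2 ≠ 0 := by
    intro h
    apply hM22
    rw [ht 2, h, map_zero, zero_mul]
  -- ## the root θ in F6
  have hnoFqroot : ∀ x : Fq, x ^ 2 + t 1 * (t 2)⁻¹ * x + t 0 * (t 2)⁻¹ ≠ 0 := by
    intro x hx
    apply hnoF3root (ι3 x)
    have h1 : t 2 * (x ^ 2 + t 1 * (t 2)⁻¹ * x + t 0 * (t 2)⁻¹) =
        t 0 + t 1 * x + t 2 * x ^ 2 := by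
      field_simp
      ring
    have h2 : t 0 + t 1 * x + t 2 * x ^ 2 = 0 := by
      rw [← h1, hx, mul_zero]
    rw [ht 0, ht 1, ht 2]
    calc ι3 (t 0) * lam + ι3 (t 1) * lam * ι3 x + ι3 (t 2) * lam * ι3 x ^ 2
        = ι3 (t 0 + t 1 * x + t 2 * x ^ 2) * lam := by
          push_cast [map_add, map_mul, map_pow]
          ring
      _ = 0 := by rw [h2, map_zero, zero_mul]
  obtain ⟨θ, hθroot⟩ := SCEIAux.exists_quadratic_root ι6 (by rw [h6]) _ _ hnoFqroot
  have hfθ : ι6 (t 0) + ι6 (t 1) * θ + ι6 (t 2) * θ ^ 2 = 0 := by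
    have := congrArg (fun z => ι6 (t 2) * z) hθroot
    simp only [mul_zero] at this
    rw [← this]
    rw [map_mul, map_mul, map_inv₀]
    have ht2' : ι6 (t 2) ≠ 0 := fun h => ht2 (ι6.injective (by rw [h, map_zero]))
    field_simp
    ring
  -- roots are θ and θ^q ; all facts about them
  set θq : F6 := θ ^ q with hθqdef
  have hfrobroot : ∀ z : F6, ι6 (t 0) + ι6 (t 1) * z + ι6 (t 2) * z ^ 2 = 0 →
      ι6 (t 0) + ι6 (t 1) * z ^ q + ι6 (t 2) * (z ^ q) ^ 2 = 0 := by
    intro z hz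
    have h0 := congrArg σ6 hz
    rw [map_zero, map_add, map_add, map_mul, map_mul, map_pow] at h0
    simp only [hσ6] at h0
    rw [hfix6, hfix6, hfix6] at h0
    linear_combination h0
  have hfθq : ι6 (t 0) + ι6 (t 1) * θq + ι6 (t 2) * θq ^ 2 = 0 := hfrobroot θ hfθ
  have ht2' : ι6 (t 2) ≠ 0 := fun h => ht2 (ι6.injective (by rw [h, map_zero]))
  have hlam6 : ι36 lam ≠ 0 := fun h => hlam0 (ι36.injective (by rw [h, map_zero]))
  -- non-rationality of any root
  have hnonrat : ∀ z : F6, ι6 (t 0) + ι6 (t 1) * z + ι6 (t 2) * z ^ 2 = 0 →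
      ¬∃ y : F3, ι36 y = z := by
    rintro z hz ⟨y, rfl⟩
    apply hnoF3root y
    apply ι36.injective
    rw [ht 0, ht 1, ht 2, map_zero]
    simp only [map_add, map_mul, map_pow, htower]
    linear_combination ι36 lam * hz
  have hθnθq : θ ≠ θq := by
    intro h
    have hfixq : θ ^ q = θ := by rw [← hθqdef, ← h]
    have h3fix : θ ^ Fintype.card F3 = θ := by
      rw [h3, show q ^ 3 = q * q * q by ring, pow_mul, pow_mul, hfixq, hfixq, hfixq]
    obtain ⟨y, hy⟩ := SCEIAux.fixed_mem_image ι36 h3fix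
    exact hnonrat θ hfθ ⟨y, hy⟩
  -- the only roots are θ and θq
  have hallroots : ∀ z : F6, ι6 (t 0) + ι6 (t 1) * z + ι6 (t 2) * z ^ 2 = 0 →
      z = θ ∨ z = θq := by
    set g : Polynomial F6 := Polynomial.C (ι6 (t 2)) * Polynomial.X ^ 2 +
        Polynomial.C (ι6 (t 1)) * Polynomial.X + Polynomial.C (ι6 (t 0)) with hgdef
    have hgdeg : g.natDegree = 2 := Polynomial.natDegree_quadratic ht2'
    have hgne : g ≠ 0 := by
      intro h0
      rw [h0] at hgdeg
      simp at hgdeg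
    have hriff : ∀ w : F6, ι6 (t 0) + ι6 (t 1) * w + ι6 (t 2) * w ^ 2 = 0 → w ∈ g.roots := by
      intro w hw
      rw [Polynomial.mem_roots hgne]
      show g.eval w = 0
      rw [hgdef]
      simp only [Polynomial.eval_add, Polynomial.eval_mul, Polynomial.eval_pow,
        Polynomial.eval_C, Polynomial.eval_X]
      linear_combination hw
    have hTsub : ({θ, θq} : Finset F6) ⊆ g.roots.toFinset := by
      intro x hx
      rcases Finset.mem_insert.mp hx with hx | hx
      · rw [hx]
        exact Multiset.mem_toFinset.mpr (hriff θ hfθ)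
      · rw [Finset.mem_singleton] at hx
        rw [hx]
        exact Multiset.mem_toFinset.mpr (hriff θq hfθq)
    have hcard2 : ({θ, θq} : Finset F6).card = 2 := by
      rw [Finset.card_insert_of_notMem (by simpa using hθnθq), Finset.card_singleton]
    have hle2 : g.roots.toFinset.card ≤ 2 := by
      calc g.roots.toFinset.card ≤ g.roots.card := Multiset.toFinset_card_le _
        _ ≤ g.natDegree := Polynomial.card_roots' g
        _ = 2 := hgdeg
    have hTeq : ({θ, θq} : Finset F6) = g.roots.toFinset :=
      Finset.eq_of_subset_of_card_le hTsub (by omega)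
    intro z hz
    have hzmem : z ∈ g.roots.toFinset := Multiset.mem_toFinset.mpr (hriff z hz)
    rw [← hTeq] at hzmem
    simpa using hzmem
  have hθq2 : θ ^ (q * q) = θ := by
    have hr : θq ^ q = θ ∨ θq ^ q = θq := hallroots _ (hfrobroot θq hfθq)
    rcases hr with h | h
    · have h' : (θ ^ q) ^ q = θ := by rw [← hθqdef]; exact h
      rw [pow_mul]
      exact h'
    · exfalso
      apply hθnθq
      have h' : θq ^ q = θ ^ q := by rw [h, hθqdef]
      exact (hσ6inj h').symm
  have hθq3 : θ ^ q ^ 3 = θq := by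
    rw [show q ^ 3 = q * q * q by ring, pow_mul, hθq2, hθqdef]
  -- ## the points Pb and Qb
  set vθ : Fin 3 → F6 := M6.mulVec ![1, θ, θ ^ 2] with hvθdef
  set vθq : Fin 3 → F6 := M6.mulVec ![1, θq, θq ^ 2] with hvθqdef
  have hM6row : ∀ j, M6 2 j = ι6 (t j) * ι36 lam := by
    intro j
    rw [hM6def, Matrix.map_apply, ht j, map_mul, htower]
  have hval : ∀ z : F6, M6.mulVec ![1, z, z ^ 2] 2 =
      (ι6 (t 0) + ι6 (t 1) * z + ι6 (t 2) * z ^ 2) * ι36 lam := by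
    intro z
    rw [SCEIAux.mulVec3, hM6row, hM6row, hM6row]
    have e0 : (![1, z, z ^ 2] : Fin 3 → F6) 0 = 1 := rfl
    have e1 : (![1, z, z ^ 2] : Fin 3 → F6) 1 = z := rfl
    have e2 : (![1, z, z ^ 2] : Fin 3 → F6) 2 = z ^ 2 := rfl
    rw [e0, e1, e2]
    ring
  have hvθ2 : vθ 2 = 0 := by rw [hvθdef, hval, hfθ, zero_mul]
  have hvθq2 : vθq 2 = 0 := by rw [hvθqdef, hval, hfθq, zero_mul]
  have hvne : ∀ z : F6, M6.mulVec ![1, z, z ^ 2] ≠ 0 := by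
    intro z h0
    have := SCEIAux.mulVec_inj hM6det (by rw [h0, Matrix.mulVec_zero] :
      M6.mulVec ![1, z, z ^ 2] = M6.mulVec 0)
    simpa using congrFun this 0
  set Pb : Pt2e F6 := Projectivization.mk F6 vθ (hvne θ) with hPbdef
  set Qb : Pt2e F6 := Projectivization.mk F6 vθq (hvne θq) with hQbdef
  have hpePb : pe Pb vθ := by rw [hPbdef]; exact SCEIAux.pe_mk (K := F6) _ _
  have hpeQb : pe Qb vθq := by rw [hQbdef]; exact SCEIAux.pe_mk (K := F6) _ _
  obtain ⟨cP, hcP, hPrep⟩ := id hpePb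
  obtain ⟨cQ, hcQ, hQrep⟩ := id hpeQb
  have hPbQb : Pb ≠ Qb := by
    intro h
    rw [hPbdef, hQbdef, Projectivization.mk_eq_mk_iff] at h
    obtain ⟨a, ha⟩ := h
    rw [hvθdef, hvθqdef, ← Matrix.mulVec_smul] at ha
    have := SCEIAux.mulVec_inj hM6det ha
    have h0 := congrFun this 0
    have h1 := congrFun this 1
    simp only [Pi.smul_apply, Matrix.cons_val_zero, Matrix.cons_val_one, Matrix.head_cons,
      Units.smul_def, smul_eq_mul, mul_one] at h0 h1
    apply hθnθq
    rw [← h1, h0, one_mul]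
  -- ## F6-matrices and the key identity over F6
  set B6 : Matrix (Fin 3) (Fin 3) F6 := B.map ι36 with hB6def
  have hM6σ : M6.map σ6 = Mσ.map ι36 := by
    ext i j
    show σ6 (ι36 (M i j)) = ι36 (σ3 (M i j))
    rw [hσ6, hσ3, map_pow]
  have hB6Mσ6 : B6 * M6.map σ6 = M6 := by
    rw [hM6σ, hB6def, ← Matrix.map_mul, hBMσ]
  have hpow6 : ∀ z : F6, (fun i => (![1, z, z ^ 2] : Fin 3 → F6) i ^ q) =
      ![1, z ^ q, (z ^ q) ^ 2] := by
    intro z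
    funext i
    fin_cases i
    · exact one_pow q
    · rfl
    · show (z ^ 2) ^ q = (z ^ q) ^ 2
      rw [← pow_mul, ← pow_mul, mul_comm]
  have hkey6 : ∀ z : F6, B6.mulVec (fun i => (M6.mulVec ![1, z, z ^ 2]) i ^ q) =
      M6.mulVec ![1, z ^ q, (z ^ q) ^ 2] := by
    intro z
    rw [SCEIAux.step_mulVec hσ6 B6 M6, hB6Mσ6, hpow6 z]
  have hB6vθ : B6.mulVec (fun i => vθ i ^ q) = vθq := by
    rw [hvθdef, hkey6 θ, hvθqdef, ← hθqdef]
  -- ## part A : conicOf ∩ linf = ∅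
  have hA : conicOf Fq F3 M ∩ linf F3 = ∅ := by
    rw [Set.eq_empty_iff_forall_notMem]
    rintro P ⟨⟨u, hu, hpe⟩, hl⟩
    have hmem : P ∈ conicPlusOf F3 M ∩ linf F3 := by
      refine ⟨⟨u, ?_, hpe⟩, hl⟩
      rcases hu with ⟨φ, rfl⟩ | rfl
      · left
        refine ⟨ι3 φ, ?_⟩
        have harg : (fun i => (algebraMap Fq F3) ((![1, φ, φ ^ 2] : Fin 3 → Fq) i)) =
            ![1, ι3 φ, ι3 φ ^ 2] := by
          funext i
          fin_cases i
          · exact map_one ι3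
          · rfl
          · exact map_pow ι3 φ 2
        rw [harg]
      · right
        rfl
    rw [hext] at hmem
    exact hmem
  -- ## parts B,C : line memberships and non-rationality
  have hPblinfe : Pb ∈ linfe F6 := by
    show Pb.rep 2 = 0
    rw [hPrep]
    simp [hvθ2]
  have hQblinfe : Qb ∈ linfe F6 := by
    show Qb.rep 2 = 0
    rw [hQrep]
    simp [hvθq2]
  have hMinv6 : M6⁻¹ = (M⁻¹).map ι36 := by
    rw [hM6def]
    exact (SCEIAux.map_matrix_inv ι36 M hM).symm
  have hnrat : ∀ z : F6, (ι6 (t 0) + ι6 (t 1) * z + ι6 (t 2) * z ^ 2 = 0) →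
      ∀ P : Pt2e F6, pe P (M6.mulVec ![1, z, z ^ 2]) →
      ¬∃ (u : Fin 3 → F3) (c : F6), c ≠ 0 ∧ P.rep = c • fun i => algebraMap F3 F6 (u i) := by
    rintro z hz P ⟨c0, hc0, hrep0⟩ ⟨u3, c, hc, hrepu⟩
    have hd : M6.mulVec ![1, z, z ^ 2] = (c0⁻¹ * c) • fun i => ι36 (u3 i) := by
      have heq : c0 • M6.mulVec ![1, z, z ^ 2] = c • fun i => ι36 (u3 i) :=
        hrep0.symm.trans hrepu
      calc M6.mulVec ![1, z, z ^ 2]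
          = c0⁻¹ • (c0 • M6.mulVec ![1, z, z ^ 2]) := by
            rw [smul_smul, inv_mul_cancel₀ hc0, one_smul]
        _ = c0⁻¹ • (c • fun i => ι36 (u3 i)) := by rw [heq]
        _ = (c0⁻¹ * c) • fun i => ι36 (u3 i) := by rw [smul_smul]
    have hd0 : c0⁻¹ * c ≠ 0 := mul_ne_zero (inv_ne_zero hc0) hc
    have hx : ![1, z, z ^ 2] = (c0⁻¹ * c) • fun i => ι36 ((M⁻¹.mulVec u3) i) := by
      have h1 : M6⁻¹.mulVec (M6.mulVec ![1, z, z ^ 2]) = ![1, z, z ^ 2] := by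
        rw [Matrix.mulVec_mulVec, Matrix.nonsing_inv_mul _ hM6det, Matrix.one_mulVec]
      rw [← h1, hd, Matrix.mulVec_smul, hMinv6, SCEIAux.map_mulVec ι36 M⁻¹ u3]
    have h0 := congrFun hx 0
    have h1 := congrFun hx 1
    simp only [Matrix.cons_val_zero, Matrix.cons_val_one, Matrix.head_cons, Pi.smul_apply,
      smul_eq_mul] at h0 h1
    have hw0 : ι36 ((M⁻¹.mulVec u3) 0) ≠ 0 := by
      intro hzero
      rw [hzero, mul_zero] at h0
      exact one_ne_zero h0
    have hw00 : (M⁻¹.mulVec u3) 0 ≠ 0 := fun h => hw0 (by rw [h, map_zero])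
    apply hnonrat z hz
    refine ⟨((M⁻¹.mulVec u3) 0)⁻¹ * (M⁻¹.mulVec u3) 1, ?_⟩
    rw [map_mul, map_inv₀, h1]
    have hc0c : (c0⁻¹ * c) * ι36 ((M⁻¹.mulVec u3) 0) = 1 := h0.symm
    rw [← eq_inv_of_mul_eq_one_left hc0c]
  have hPbnrat : ¬∃ (u : Fin 3 → F3) (c : F6), c ≠ 0 ∧
      Pb.rep = c • fun i => algebraMap F3 F6 (u i) :=
    hnrat θ hfθ Pb ⟨cP, hcP, hPrep⟩
  have hQbnrat : ¬∃ (u : Fin 3 → F3) (c : F6), c ≠ 0 ∧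
      Qb.rep = c • fun i => algebraMap F3 F6 (u i) :=
    hnrat θq hfθq Qb ⟨cQ, hcQ, hQrep⟩
  -- ## part D : the intersection is {Pb, Qb}
  have hMM6 : M.map (algebraMap F3 F6) = M6 := rfl
  have hD : conicPPOf F3 F6 M ∩ linfe F6 = {Pb, Qb} := by
    ext P
    simp only [Set.mem_insert_iff, Set.mem_singleton_iff]
    constructor
    · rintro ⟨⟨u, hu, hpe⟩, hl⟩
      obtain ⟨c0, hc0, hrep0⟩ := hpe
      have hu2 : u 2 = 0 := by
        have h2 : P.rep 2 = 0 := hl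
        rw [hrep0] at h2
        simpa [hc0] using h2
      rcases hu with ⟨z, rfl⟩ | rfl
      · rw [hMM6] at hu2 hrep0
        have hz0 : ι6 (t 0) + ι6 (t 1) * z + ι6 (t 2) * z ^ 2 = 0 := by
          rw [hval z] at hu2
          rcases mul_eq_zero.mp hu2 with h | h
          · exact h
          · exact absurd h hlam6
        rcases hallroots z hz0 with rfl | rfl
        · left
          exact SCEIAux.pe_unique ⟨c0, hc0, hrep0⟩ hpePb
        · right
          exact SCEIAux.pe_unique ⟨c0, hc0, hrep0⟩ hpeQb
      · exfalso
        rw [hMM6, SCEIAux.mulVec3] at hu2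
        apply hM22
        apply ι36.injective
        rw [map_zero, ← hu2]
        show ι36 (M 2 2) = M6 2 0 * _ + M6 2 1 * _ + M6 2 2 * _
        simp only [Matrix.cons_val_zero, Matrix.cons_val_one, Matrix.head_cons]
        show ι36 (M 2 2) = M6 2 0 * 0 + M6 2 1 * 0 + M6 2 2 * 1
        rw [mul_zero, mul_zero, mul_one, zero_add, zero_add]
        rfl
    · rintro (rfl | rfl)
      · exact ⟨⟨vθ, Or.inl ⟨θ, rfl⟩, hpePb⟩, hPblinfe⟩
      · exact ⟨⟨vθq, Or.inl ⟨θq, rfl⟩, hpeQb⟩, hQblinfe⟩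
  -- ## part E : the collineation c̄_π
  have cond2 : ∀ P ∈ subplaneOf Fq F3 M, pe P (cpiVec q B P.rep) := by
    rintro P ⟨u, ⟨av, rfl⟩, c, hc, hrep⟩
    have hcpi : cpiVec q B P.rep = c ^ q • M.mulVec (fun i => ι3 (av i)) := by
      rw [hrep]
      show B.mulVec _ = _
      rw [SCEIAux.pow_smul_vec, Matrix.mulVec_smul, hkey3]
    rw [hcpi]
    exact SCEIAux.pe_smul ⟨c, hc, hrep⟩ (pow_ne_zero _ hc)
  have cond3 : ∀ P : Pt2 F3, pe P ((cpiVec q B)^[3] P.rep) := by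
    intro P
    rw [SCEIAux.cpi_iter3 hσ3 hfixF3' B hB3]
    exact ⟨1, one_ne_zero, (one_smul _ _).symm⟩
  obtain ⟨ω, hω⟩ := SCEIAux.exists_nonfix (K := F3) hq1 (by
    rw [h3]
    calc q = q ^ 1 := (pow_one q).symm
      _ < q ^ 3 := Nat.pow_lt_pow_right hq1 (by omega))
  have cond4 : ∃ P : Pt2 F3, ¬ pe P (cpiVec q B P.rep) := by
    have hvne3 : M.mulVec ![1, ω, 0] ≠ 0 := by
      intro h0
      have := SCEIAux.mulVec_inj hM (h0.trans (Matrix.mulVec_zero M).symm)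
      simpa using congrFun this 0
    refine ⟨Projectivization.mk F3 _ hvne3, ?_⟩
    obtain ⟨c, hc, hrep⟩ := SCEIAux.pe_mk (K := F3) _ hvne3
    rintro ⟨d, hd, hrepd⟩
    have hpow : (fun i => (![1, ω, 0] : Fin 3 → F3) i ^ q) = ![1, ω ^ q, 0] := by
      funext i
      fin_cases i
      · exact one_pow q
      · rfl
      · exact zero_pow hq0
    have hcpi : cpiVec q B (Projectivization.mk F3 _ hvne3).rep =
        c ^ q • M.mulVec ![1, ω ^ q, 0] := by
      rw [hrep]
      show B.mulVec _ = _
      rw [SCEIAux.pow_smul_vec, Matrix.mulVec_smul, SCEIAux.step_mulVec hσ3 B M, hBMσ, hpow]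
    rw [hcpi, hrep] at hrepd
    have heq2 : M.mulVec (c • ![1, ω, 0]) = M.mulVec ((d * c ^ q) • ![1, ω ^ q, 0]) := by
      rw [Matrix.mulVec_smul, Matrix.mulVec_smul, ← smul_smul]
      exact hrepd
    have hv := SCEIAux.mulVec_inj hM heq2
    have h01 := congrFun hv 0
    have h11 := congrFun hv 1
    simp only [Pi.smul_apply, Matrix.cons_val_zero, Matrix.cons_val_one, Matrix.head_cons,
      smul_eq_mul, mul_one] at h01 h11
    apply hω
    have : c * ω = c * ω ^ q := by rw [h11, ← h01]
    have := mul_left_cancel₀ hc this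
    exact this.symm
  have hCpi : IsCpiGen Fq F3 M B := ⟨hBdet, cond2, cond3, cond4⟩
  -- the three pe facts
  have peQcpi : pe Qb (cpiVec q B6 Pb.rep) := by
    have hcpi : cpiVec q B6 Pb.rep = cP ^ q • vθq := by
      rw [hPrep]
      show B6.mulVec _ = _
      rw [SCEIAux.pow_smul_vec, Matrix.mulVec_smul, hB6vθ]
    rw [hcpi]
    exact SCEIAux.pe_smul hpeQb (pow_ne_zero _ hcP)
  have peQq3 : pe Qb (fun i => Pb.rep i ^ q ^ 3) := by
    have hM63 : M6.map σ63 = M6 := by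
      ext i j
      show σ63 (ι36 (M i j)) = ι36 (M i j)
      rw [hσ63]
      exact hfix36 _
    have hexp : (fun i => Pb.rep i ^ q ^ 3) = cP ^ q ^ 3 • vθq := by
      have hstep : (fun i => Pb.rep i ^ q ^ 3) = fun i => (cP • vθ) i ^ q ^ 3 := by
        rw [hPrep]
      rw [hstep, SCEIAux.pow_smul_vec]
      congr 1
      rw [hvθdef, SCEIAux.frob_mulVec hσ63 M6, hM63, hvθqdef]
      have harg : (fun i => (![1, θ, θ ^ 2] : Fin 3 → F6) i ^ q ^ 3) = ![1, θq, θq ^ 2] := by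
        funext i
        fin_cases i
        · exact one_pow _
        · exact hθq3
        · show (θ ^ 2) ^ q ^ 3 = θq ^ 2
          rw [← pow_mul, mul_comm, pow_mul, hθq3]
      rw [harg]
    rw [hexp]
    exact SCEIAux.pe_smul hpeQb (pow_ne_zero _ hcP)
  have pePiter : pe Pb ((cpiVec q B6)^[2] Pb.rep) := by
    have hit : (cpiVec q B6)^[2] Pb.rep = cpiVec q B6 (cpiVec q B6 Pb.rep) := by
      simp [Function.iterate_succ, Function.comp]
    have hcpi1 : cpiVec q B6 Pb.rep = cP ^ q • vθq := by
      rw [hPrep]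
      show B6.mulVec _ = _
      rw [SCEIAux.pow_smul_vec, Matrix.mulVec_smul, hB6vθ]
    have hθqq : θq ^ q = θ := by
      rw [hθqdef, ← pow_mul, hθq2]
    have hcpi2 : cpiVec q B6 (cP ^ q • vθq) = (cP ^ q) ^ q • vθ := by
      show B6.mulVec _ = _
      rw [SCEIAux.pow_smul_vec, Matrix.mulVec_smul, hvθqdef, hkey6 θq, hθqq, hvθdef]
    rw [hit, hcpi1, hcpi2]
    exact SCEIAux.pe_smul hpePb (pow_ne_zero _ (pow_ne_zero _ hcP))
  -- ## part F : the collineation c̄_b on ℓ∞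
  have hMσ2 : ∀ j, Mσ 2 j = ι3 (t j) * lam ^ q := by
    intro j
    show σ3 (M 2 j) = _
    rw [hσ3, ht j, mul_pow, hfix3]
  have hB2 : ∀ l, B 2 l = (lam * (lam ^ q)⁻¹) * (1 : Matrix (Fin 3) (Fin 3) F3) 2 l := by
    intro l
    have hMM : (Mσ * Mσ⁻¹) 2 l = (1 : Matrix (Fin 3) (Fin 3) F3) 2 l := by
      rw [Matrix.mul_nonsing_inv _ hMσdet]
    rw [← hMM]
    show (M * Mσ⁻¹) 2 l = _
    rw [Matrix.mul_apply, Matrix.mul_apply, Finset.mul_sum]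
    apply Finset.sum_congr rfl
    intro j _
    rw [ht j, hMσ2 j]
    have hlq : lam ^ q ≠ 0 := pow_ne_zero _ hlam0
    field_simp
  have hB20 : B 2 0 = 0 := by
    rw [hB2 0, Matrix.one_apply_ne (by decide : (2 : Fin 3) ≠ 0), mul_zero]
  have hB21 : B 2 1 = 0 := by
    rw [hB2 1, Matrix.one_apply_ne (by decide : (2 : Fin 3) ≠ 1), mul_zero]
  set D : Matrix (Fin 2) (Fin 2) F3 := SCEIAux.blk B with hDdef
  have hBσ20 : (B.map σ3) 2 0 = 0 := by
    show σ3 (B 2 0) = 0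
    rw [hB20, map_zero]
  have hBσ21 : (B.map σ3) 2 1 = 0 := by
    show σ3 (B 2 1) = 0
    rw [hB21, map_zero]
  have hBσσ20 : ((B.map σ3).map σ3) 2 0 = 0 := by
    show σ3 ((B.map σ3) 2 0) = 0
    rw [hBσ20, map_zero]
  have hBσσ21 : ((B.map σ3).map σ3) 2 1 = 0 := by
    show σ3 ((B.map σ3) 2 1) = 0
    rw [hBσ21, map_zero]
  have hD3 : D * D.map σ3 * (D.map σ3).map σ3 = 1 := by
    rw [hDdef, ← SCEIAux.blk_map σ3 B, ← SCEIAux.blk_map σ3 (B.map σ3)]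
    rw [← SCEIAux.blk_mul B (B.map σ3) hBσ20 hBσ21,
      ← SCEIAux.blk_mul (B * B.map σ3) ((B.map σ3).map σ3) hBσσ20 hBσσ21, hB3,
      SCEIAux.blk_one]
  have hDdet : IsUnit D.det := by
    have h1 : D.det * ((D.map σ3).det * ((D.map σ3).map σ3).det) = 1 := by
      rw [← Matrix.det_mul, ← Matrix.det_mul, ← Matrix.mul_assoc, hD3, Matrix.det_one]
    exact IsUnit.of_mul_eq_one _ h1
  have condb2 : ∀ P ∈ subplaneOf Fq F3 M ∩ linf F3, ∃ c : F3, c ≠ 0 ∧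
      cbVec q D ![P.rep 0, P.rep 1] = c • ![P.rep 0, P.rep 1] := by
    rintro P ⟨⟨u, ⟨av, rfl⟩, c, hc, hrep⟩, hl⟩
    have hu2 : (M.mulVec fun i => ι3 (av i)) 2 = 0 := by
      have h2 : P.rep 2 = 0 := hl
      rw [hrep] at h2
      simpa [hc] using h2
    have hupair : (![P.rep 0, P.rep 1] : Fin 2 → F3) =
        c • ![(M.mulVec fun i => ι3 (av i)) 0, (M.mulVec fun i => ι3 (av i)) 1] := by
      funext k
      fin_cases k <;> simp [hrep, hι3def]
    refine ⟨c ^ q * c⁻¹, mul_ne_zero (pow_ne_zero _ hc) (inv_ne_zero hc), ?_⟩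
    set w : Fin 3 → F3 := fun i => (M.mulVec fun j => ι3 (av j)) i ^ q with hwdef
    have hw2 : w 2 = 0 := by
      show (M.mulVec fun j => ι3 (av j)) 2 ^ q = 0
      rw [hu2, zero_pow hq0]
    have hDu : D.mulVec ![w 0, w 1] =
        ![(M.mulVec fun j => ι3 (av j)) 0, (M.mulVec fun j => ι3 (av j)) 1] := by
      funext k
      rw [hDdef, SCEIAux.pair_mulVec B w hw2 k, hwdef, hkey3 av]
      fin_cases k <;> rfl
    have hpows : (fun i =>
        (c • ![(M.mulVec fun j => ι3 (av j)) 0, (M.mulVec fun j => ι3 (av j)) 1] :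
          Fin 2 → F3) i ^ q) = c ^ q • ![w 0, w 1] := by
      funext k
      fin_cases k <;> simp [hwdef, mul_pow]
    rw [hupair]
    show D.mulVec _ = _
    rw [hpows, Matrix.mulVec_smul, hDu, smul_smul]
    congr 1
    rw [mul_assoc, inv_mul_cancel₀ hc, mul_one]
  have condb3 : ∀ u : Fin 2 → F3, u ≠ 0 → ∃ c : F3, c ≠ 0 ∧ (cbVec q D)^[3] u = c • u := by
    intro u hu
    exact ⟨1, one_ne_zero, by rw [SCEIAux.cb_iter3 hσ3 hfixF3' D hD3, one_smul]⟩
  have condb4 : ∃ u : Fin 2 → F3, u ≠ 0 ∧ ¬∃ c : F3, c ≠ 0 ∧ cbVec q D u = c • u := by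
    by_contra hcon
    push_neg at hcon
    have hcb : ∀ v : Fin 2 → F3, cbVec q D v = D.mulVec (fun i => v i ^ q) := fun v => rfl
    obtain ⟨c1, hc1, h1⟩ := hcon ![1, 0] (by
      intro h
      simpa using congrFun h 0)
    obtain ⟨c2, hc2, h2⟩ := hcon ![0, 1] (by
      intro h
      simpa using congrFun h 1)
    obtain ⟨c3, hc3, h3⟩ := hcon ![1, 1] (by
      intro h
      simpa using congrFun h 0)
    obtain ⟨c4, hc4, h4⟩ := hcon ![1, ω] (by
      intro h
      simpa using congrFun h 0)
    rw [hcb] at h1 h2 h3 h4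
    have he1 : (fun i => (![1, 0] : Fin 2 → F3) i ^ q) = ![1, 0] := by
      funext k
      fin_cases k
      · exact one_pow q
      · exact zero_pow hq0
    have he2 : (fun i => (![0, 1] : Fin 2 → F3) i ^ q) = ![0, 1] := by
      funext k
      fin_cases k
      · exact zero_pow hq0
      · exact one_pow q
    have he3 : (fun i => (![1, 1] : Fin 2 → F3) i ^ q) = ![1, 1] := by
      funext k
      fin_cases k <;> exact one_pow q
    have he4 : (fun i => (![1, ω] : Fin 2 → F3) i ^ q) = ![1, ω ^ q] := by
      funext k
      fin_cases k
      · exact one_pow q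
      · rfl
    rw [he1] at h1
    rw [he2] at h2
    rw [he3] at h3
    rw [he4] at h4
    have d00 := congrFun h1 0
    have d10 := congrFun h1 1
    have d01 := congrFun h2 0
    have d11 := congrFun h2 1
    have d30 := congrFun h3 0
    have d31 := congrFun h3 1
    have d40 := congrFun h4 0
    have d41 := congrFun h4 1
    rw [SCEIAux.mulVec2] at d00 d10 d01 d11 d30 d31 d40 d41
    simp only [Matrix.cons_val_zero, Matrix.cons_val_one, Matrix.head_cons, Pi.smul_apply,
      smul_eq_mul, mul_one, mul_zero, add_zero, zero_add] at d00 d10 d01 d11 d30 d31 d40 d41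
    -- d00 : D 0 0 = c1, d10 : D 1 0 = 0, d01 : D 0 1 = 0, d11 : D 1 1 = c2
    apply hω
    have hc13 : c1 = c3 := by
      rw [d00, d01] at d30
      simpa using d30
    have hc23 : c2 = c3 := by
      rw [d10, d11] at d31
      simpa using d31
    have h40' : c1 = c4 := by
      rw [d00, d01] at d40
      simpa using d40
    have h41' : c2 * ω ^ q = c4 * ω := by
      rw [d10, d11] at d41
      simpa using d41
    rw [hc23, ← hc13, h40'] at h41'
    exact mul_left_cancel₀ hc4 h41'
  have hCb : IsCbGen Fq F3 M D := ⟨hDdet, condb2, condb3, condb4⟩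
  -- final items about pairs
  have habcP : (![vθ 0, vθ 1, (0 : F6)]) = vθ := by
    funext i
    fin_cases i
    · rfl
    · rfl
    · exact hvθ2.symm
  have habcQ : (![vθq 0, vθq 1, (0 : F6)]) = vθq := by
    funext i
    fin_cases i
    · rfl
    · rfl
    · exact hvθq2.symm
  have pePabc : pe Pb ![vθ 0, vθ 1, 0] := by rw [habcP]; exact hpePb
  have peQabc : pe Qb ![vθq 0, vθq 1, 0] := by rw [habcQ]; exact hpeQb
  have hD6 : D.map ι36 = SCEIAux.blk B6 := rfl
  have hfinalcb : cbVec q (D.map ι36) ![vθ 0, vθ 1] = (1 : F6) • ![vθq 0, vθq 1] := by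
    set w6 : Fin 3 → F6 := fun i => vθ i ^ q with hw6def
    have hpows : (fun i => (![vθ 0, vθ 1] : Fin 2 → F6) i ^ q) = ![w6 0, w6 1] := by
      funext k
      fin_cases k <;> rfl
    have hw2 : w6 2 = 0 := by
      show vθ 2 ^ q = 0
      rw [hvθ2, zero_pow hq0]
    show (D.map ι36).mulVec _ = _
    rw [hpows, hD6, one_smul]
    funext k
    rw [SCEIAux.pair_mulVec B6 w6 hw2 k, hw6def, hB6vθ]
    fin_cases k <;> rfl
  exact ⟨hA, Pb, Qb, hPbQb, hPblinfe, hQblinfe, hPbnrat, hQbnrat, hD, B, hCpi, peQcpi, peQq3,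
    pePiter, D, hCb, vθ 0, vθ 1, vθq 0, vθq 1, pePabc, peQabc, 1, one_ne_zero, hfinalcb⟩
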